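/- arXiv:2111.05065 — 7 statements merged into one kernel-verified Lean document; each statement's English description precedes it below -/
import Mathlib

section
/- Let E, J, R, Q ∈ ℝ^{n×n} and B ∈ ℝ^{n×m} define a port-Hamiltonian descriptor system (Jᵀ = −J, R = Rᵀ ⪰ 0, EᵀQ = QᵀE ⪰ 0), with A := (J−R)Q and C := BᵀQ, and let S, T ∈ GL(n,ℝ). Define the transformed data Ẽ := SET⁻¹, J̃ := SJSᵀ, R̃ := SRSᵀ, Q̃ := S⁻ᵀQT⁻¹, Ã := (J̃−R̃)Q̃ = SAT⁻¹, B̃ := SB, C̃ := B̃ᵀQ̃ = CT⁻¹. Then 𝒫c and 𝒫f are stabilizing solutions of the control GARE Aᵀ𝒫c + 𝒫cᵀA − 𝒫cᵀBBᵀ𝒫c + CᵀC = 0, Eᵀ𝒫c = 𝒫cᵀE and of the modified filter GARE A𝒫fᵀ + 𝒫fAᵀ − 𝒫fCᵀC𝒫fᵀ + BBᵀ + 2R = 0, E𝒫fᵀ = 𝒫fEᵀ associated with (E,A,B,C,R) if and only if S⁻ᵀ𝒫cT⁻¹ and S𝒫fTᵀ are stabilizing solutions of the corresponding GAREs associated with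 (Ẽ,Ã,B̃,C̃,R̃). -/
open Matrix

noncomputable section

/-- Entrywise complexification of a real matrix. -/
def Matrix.toC {k l : Type*} (M : Matrix k l ℝ) : Matrix k l ℂ :=
  M.map (algebraMap ℝ ℂ)

section Pencil

variable {n : Type*} [Fintype n] [DecidableEq n]

/-- The matrix pencil `(E, A)` is regular: `det (s E - A) ≠ 0` for some `s ∈ ℂ`. -/
def PencilRegular (E A : Matrix n n ℝ) : Prop :=
  ∃ s : ℂ, (s • E.toC - A.toC).det ≠ 0

/-- `lam ∈ ℂ` is a finite eigenvalue of the pencil `(E, A)`. -/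
def PencilFiniteEig (E A : Matrix n n ℝ) (lam : ℂ) : Prop :=
  (lam • E.toC - A.toC).det = 0

/-- The polynomial `s ↦ det (s E - A)` associated with the pencil `(E, A)`. -/
def pencilPoly (E A : Matrix n n ℝ) : Polynomial ℝ :=
  ((Polynomial.X : Polynomial ℝ) • E.map (Polynomial.C : ℝ → Polynomial ℝ)
      - A.map (Polynomial.C : ℝ → Polynomial ℝ)).det

/-- The pencil `(E, A)` is impulse-free: the degree of `s ↦ det (s E - A)` equals `rank E`. -/
def PencilImpulseFree (E A : Matrix n n ℝ) : Prop :=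
  (pencilPoly E A).natDegree = E.rank

/-- The pencil `(E, A)` is regular, impulse-free, and all of its finite eigenvalues
have negative real part. -/
def PencilStable (E A : Matrix n n ℝ) : Prop :=
  PencilRegular E A ∧ PencilImpulseFree E A ∧
    ∀ lam : ℂ, PencilFiniteEig E A lam → lam.re < 0

end Pencil

section Systems

variable {n m p : Type*} [Fintype n] [DecidableEq n] [Fintype m] [Fintype p]

/-- `(E, A, B)` is impulse controllable. -/
def ImpulseControllable (E A : Matrix n n ℝ) (B : Matrix n m ℝ) : Prop :=
  ∀ S₀ : Matrix n (Fin (Fintype.card n - E.rank)) ℝ,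
    LinearMap.range S₀.mulVecLin = LinearMap.ker E.mulVecLin →
    (Matrix.fromCols (Matrix.fromCols E (A * S₀)) B).rank = Fintype.card n

/-- `(E, A, B)` is strongly stabilizable. -/
def StronglyStabilizable (E A : Matrix n n ℝ) (B : Matrix n m ℝ) : Prop :=
  ImpulseControllable E A B ∧
    ∀ lam : ℂ, 0 ≤ lam.re →
      (Matrix.fromCols (lam • E.toC - A.toC) B.toC).rank = Fintype.card n

/-- `(E, A, B)` is strongly anti-stabilizable. -/
def StronglyAntiStabilizable (E A : Matrix n n ℝ) (B : Matrix n m ℝ) : Prop :=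
  ImpulseControllable E A B ∧
    ∀ lam : ℂ, lam.re ≤ 0 →
      (Matrix.fromCols (lam • E.toC - A.toC) B.toC).rank = Fintype.card n

/-- `(E, A, B)` is strongly controllable. -/
def StronglyControllable (E A : Matrix n n ℝ) (B : Matrix n m ℝ) : Prop :=
  StronglyStabilizable E A B ∧ StronglyAntiStabilizable E A B

/-- `(E, A, C)` is strongly detectable. -/
def StronglyDetectable (E A : Matrix n n ℝ) (C : Matrix p n ℝ) : Prop :=
  StronglyStabilizable Eᵀ Aᵀ Cᵀ

/-- The control generalized algebraic Riccati equation. -/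
def ControlGARE (E A : Matrix n n ℝ) (B : Matrix n m ℝ) (C : Matrix p n ℝ)
    (Pc : Matrix n n ℝ) : Prop :=
  Aᵀ * Pc + Pcᵀ * A - Pcᵀ * B * Bᵀ * Pc + Cᵀ * C = 0 ∧ Eᵀ * Pc = Pcᵀ * E

/-- The modified filter generalized algebraic Riccati equation. -/
def FilterGARE (E A : Matrix n n ℝ) (B : Matrix n m ℝ) (C : Matrix p n ℝ)
    (R : Matrix n n ℝ) (Pf : Matrix n n ℝ) : Prop :=
  A * Pfᵀ + Pf * Aᵀ - Pf * Cᵀ * C * Pfᵀ + B * Bᵀ + (2 : ℝ) • R = 0 ∧ E * Pfᵀ = Pf * Eᵀ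

/-- `Pc` is a stabilizing solution of the control GARE. -/
def ControlStabilizing (E A : Matrix n n ℝ) (B : Matrix n m ℝ) (C : Matrix p n ℝ)
    (Pc : Matrix n n ℝ) : Prop :=
  ControlGARE E A B C Pc ∧ PencilStable E (A - B * Bᵀ * Pc)

/-- `Pf` is a stabilizing solution of the modified filter GARE. -/
def FilterStabilizing (E A : Matrix n n ℝ) (B : Matrix n m ℝ) (C : Matrix p n ℝ)
    (R : Matrix n n ℝ) (Pf : Matrix n n ℝ) : Prop :=
  FilterGARE E A B C R Pf ∧ PencilStable E (A - Pf * Cᵀ * C)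

end Systems


section Aux

open Matrix Polynomial

variable {n m p : ℕ}

lemma toC_mul {k l o : ℕ} (M : Matrix (Fin k) (Fin l) ℝ) (N : Matrix (Fin l) (Fin o) ℝ) :
    (M * N).toC = M.toC * N.toC :=
  Matrix.map_mul (L := M) (M := N) (f := algebraMap ℝ ℂ)

lemma det_toC (M : Matrix (Fin n) (Fin n) ℝ) :
    (M.toC).det = algebraMap ℝ ℂ M.det := (RingHom.map_det _ M).symm

lemma pencil_shift (E A S T : Matrix (Fin n) (Fin n) ℝ) (s : ℂ) :
    s • (S * E * T).toC - (S * A * T).toC = S.toC * (s • E.toC - A.toC) * T.toC := by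
  simp [toC_mul, Matrix.mul_sub, Matrix.sub_mul, Matrix.mul_smul, Matrix.smul_mul,
    Matrix.mul_assoc]

lemma pencilPoly_mul (E A S T : Matrix (Fin n) (Fin n) ℝ) :
    pencilPoly (S * E * T) (S * A * T) = C S.det * pencilPoly E A * C T.det := by
  have key : (X : ℝ[X]) • (S * E * T).map (C : ℝ → ℝ[X]) - (S * A * T).map C
      = S.map C * ((X : ℝ[X]) • E.map C - A.map C) * T.map C := by
    simp [Matrix.map_mul (f := (C : ℝ →+* ℝ[X])), Matrix.mul_sub, Matrix.sub_mul,
      Matrix.mul_smul, Matrix.smul_mul, Matrix.mul_assoc]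
  have hdS : (S.map (C : ℝ → ℝ[X])).det = C S.det := by
    rw [← RingHom.mapMatrix_apply (C : ℝ →+* ℝ[X]), ← RingHom.map_det]
  have hdT : (T.map (C : ℝ → ℝ[X])).det = C T.det := by
    rw [← RingHom.mapMatrix_apply (C : ℝ →+* ℝ[X]), ← RingHom.map_det]
  rw [pencilPoly, key, Matrix.det_mul, Matrix.det_mul, hdS, hdT, pencilPoly]

lemma pencilStable_mul (E A S T : Matrix (Fin n) (Fin n) ℝ)
    (hS : IsUnit S.det) (hT : IsUnit T.det) :
    PencilStable E A → PencilStable (S * E * T) (S * A * T) := by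
  rintro ⟨⟨s, hs⟩, himp, heig⟩
  have hSC : (S.toC).det ≠ 0 := by
    rw [det_toC]
    exact fun h => hS.ne_zero ((algebraMap ℝ ℂ).injective (by rw [map_zero]; exact h))
  have hTC : (T.toC).det ≠ 0 := by
    rw [det_toC]
    exact fun h => hT.ne_zero ((algebraMap ℝ ℂ).injective (by rw [map_zero]; exact h))
  refine ⟨⟨s, ?_⟩, ?_, ?_⟩
  · rw [pencil_shift, Matrix.det_mul, Matrix.det_mul]
    exact mul_ne_zero (mul_ne_zero hSC hs) hTC
  · rw [PencilImpulseFree, pencilPoly_mul, Polynomial.natDegree_mul_C hT.ne_zero,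
      Polynomial.natDegree_C_mul hS.ne_zero,
      show S * E * T = (S * E) * T from rfl,
      Matrix.rank_mul_eq_left_of_isUnit_det T (S * E) hT,
      Matrix.rank_mul_eq_right_of_isUnit_det S E hS]
    exact himp
  · intro lam hlam
    apply heig
    rw [PencilFiniteEig, pencil_shift, Matrix.det_mul, Matrix.det_mul] at hlam
    rcases mul_eq_zero.mp hlam with h | h
    · rcases mul_eq_zero.mp h with h' | h'
      · exact absurd h' hSC
      · exact h'
    · exact absurd h hTC

lemma control_fwd (E A : Matrix (Fin n) (Fin n) ℝ) (B : Matrix (Fin n) (Fin m) ℝ)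
    (C : Matrix (Fin p) (Fin n) ℝ) (Pc : Matrix (Fin n) (Fin n) ℝ)
    (S T : Matrix (Fin n) (Fin n) ℝ) (hS : IsUnit S.det) (hT : IsUnit T.det) :
    ControlStabilizing E A B C Pc →
      ControlStabilizing (S * E * T⁻¹) (S * A * T⁻¹) (S * B) (C * T⁻¹)
        ((S⁻¹)ᵀ * Pc * T⁻¹) := by
  rintro ⟨⟨h1, h2⟩, hst⟩
  have cSl : ∀ {k : ℕ} (Y : Matrix (Fin n) (Fin k) ℝ), S⁻¹ * (S * Y) = Y := fun Y => by
    rw [← Matrix.mul_assoc, Matrix.nonsing_inv_mul S hS, Matrix.one_mul]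
  have cSl' : ∀ {k : ℕ} (Y : Matrix (Fin n) (Fin k) ℝ), Sᵀ * ((S⁻¹)ᵀ * Y) = Y := fun Y => by
    rw [← Matrix.mul_assoc, ← Matrix.transpose_mul, Matrix.nonsing_inv_mul S hS,
      Matrix.transpose_one, Matrix.one_mul]
  refine ⟨⟨?_, ?_⟩, ?_⟩
  · have key : (S * A * T⁻¹)ᵀ * ((S⁻¹)ᵀ * Pc * T⁻¹)
        + ((S⁻¹)ᵀ * Pc * T⁻¹)ᵀ * (S * A * T⁻¹)
        - ((S⁻¹)ᵀ * Pc * T⁻¹)ᵀ * (S * B) * (S * B)ᵀ * ((S⁻¹)ᵀ * Pc * T⁻¹)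
        + (C * T⁻¹)ᵀ * (C * T⁻¹)
        = (T⁻¹)ᵀ * (Aᵀ * Pc + Pcᵀ * A - Pcᵀ * B * Bᵀ * Pc + Cᵀ * C) * T⁻¹ := by
      simp only [Matrix.transpose_mul, Matrix.transpose_transpose, Matrix.mul_add,
        Matrix.add_mul, Matrix.mul_sub, Matrix.sub_mul, Matrix.mul_assoc, cSl, cSl']
    rw [key, h1, Matrix.mul_zero, Matrix.zero_mul]
  · have keyL : (S * E * T⁻¹)ᵀ * ((S⁻¹)ᵀ * Pc * T⁻¹) = (T⁻¹)ᵀ * (Eᵀ * Pc) * T⁻¹ := by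
      simp only [Matrix.transpose_mul, Matrix.mul_assoc, cSl']
    have keyR : ((S⁻¹)ᵀ * Pc * T⁻¹)ᵀ * (S * E * T⁻¹) = (T⁻¹)ᵀ * (Pcᵀ * E) * T⁻¹ := by
      simp only [Matrix.transpose_mul, Matrix.transpose_transpose, Matrix.mul_assoc, cSl]
    rw [keyL, keyR, h2]
  · have hcl : S * A * T⁻¹ - S * B * (S * B)ᵀ * ((S⁻¹)ᵀ * Pc * T⁻¹)
        = S * (A - B * Bᵀ * Pc) * T⁻¹ := by
      simp only [Matrix.transpose_mul, Matrix.mul_sub, Matrix.sub_mul, Matrix.mul_assoc, cSl']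
    rw [hcl]
    exact pencilStable_mul E (A - B * Bᵀ * Pc) S T⁻¹ hS
      (Matrix.isUnit_nonsing_inv_det T hT) hst

lemma filter_fwd (E A : Matrix (Fin n) (Fin n) ℝ) (B : Matrix (Fin n) (Fin m) ℝ)
    (C : Matrix (Fin p) (Fin n) ℝ) (R Pf : Matrix (Fin n) (Fin n) ℝ)
    (S T : Matrix (Fin n) (Fin n) ℝ) (hS : IsUnit S.det) (hT : IsUnit T.det) :
    FilterStabilizing E A B C R Pf →
      FilterStabilizing (S * E * T⁻¹) (S * A * T⁻¹) (S * B) (C * T⁻¹)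
        (S * R * Sᵀ) (S * Pf * Tᵀ) := by
  rintro ⟨⟨h1, h2⟩, hst⟩
  have cTl : ∀ {k : ℕ} (Y : Matrix (Fin n) (Fin k) ℝ), T⁻¹ * (T * Y) = Y := fun Y => by
    rw [← Matrix.mul_assoc, Matrix.nonsing_inv_mul T hT, Matrix.one_mul]
  have cTl' : ∀ {k : ℕ} (Y : Matrix (Fin n) (Fin k) ℝ), Tᵀ * ((T⁻¹)ᵀ * Y) = Y := fun Y => by
    rw [← Matrix.mul_assoc, ← Matrix.transpose_mul, Matrix.nonsing_inv_mul T hT,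
      Matrix.transpose_one, Matrix.one_mul]
  refine ⟨⟨?_, ?_⟩, ?_⟩
  · have key : (S * A * T⁻¹) * (S * Pf * Tᵀ)ᵀ + (S * Pf * Tᵀ) * (S * A * T⁻¹)ᵀ
        - (S * Pf * Tᵀ) * (C * T⁻¹)ᵀ * (C * T⁻¹) * (S * Pf * Tᵀ)ᵀ
        + (S * B) * (S * B)ᵀ + (2 : ℝ) • (S * R * Sᵀ)
        = S * (A * Pfᵀ + Pf * Aᵀ - Pf * Cᵀ * C * Pfᵀ + B * Bᵀ + (2 : ℝ) • R) * Sᵀ := by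
      simp only [Matrix.transpose_mul, Matrix.transpose_transpose, Matrix.mul_add,
        Matrix.add_mul, Matrix.mul_sub, Matrix.sub_mul, Matrix.mul_smul, Matrix.smul_mul,
        Matrix.mul_assoc, cTl, cTl']
    rw [key, h1, Matrix.mul_zero, Matrix.zero_mul]
  · have keyL : (S * E * T⁻¹) * (S * Pf * Tᵀ)ᵀ = S * (E * Pfᵀ) * Sᵀ := by
      simp only [Matrix.transpose_mul, Matrix.transpose_transpose, Matrix.mul_assoc, cTl]
    have keyR : (S * Pf * Tᵀ) * (S * E * T⁻¹)ᵀ = S * (Pf * Eᵀ) * Sᵀ := by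
      simp only [Matrix.transpose_mul, Matrix.mul_assoc, cTl']
    rw [keyL, keyR, h2]
  · have hcl : S * A * T⁻¹ - (S * Pf * Tᵀ) * (C * T⁻¹)ᵀ * (C * T⁻¹)
        = S * (A - Pf * Cᵀ * C) * T⁻¹ := by
      simp only [Matrix.transpose_mul, Matrix.mul_sub, Matrix.sub_mul, Matrix.mul_assoc, cTl']
    rw [hcl]
    exact pencilStable_mul E (A - Pf * Cᵀ * C) S T⁻¹ hS
      (Matrix.isUnit_nonsing_inv_det T hT) hst

end Aux

/-- Lemma `lem:transformedGramians`: stabilizing solutions of the two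
GAREs transform covariantly under equivalence transformations of a port-Hamiltonian
descriptor system. -/
theorem gare_stabilizing_iff_transformed
    {n m : ℕ} (E J R Q : Matrix (Fin n) (Fin n) ℝ) (B : Matrix (Fin n) (Fin m) ℝ)
    (A C_ : _) (hA : A = (J - R) * Q) (hC : C_ = Bᵀ * Q)
    (hJ : Jᵀ = -J) (hR : R.PosSemidef) (hEQ : (Eᵀ * Q).PosSemidef)
    (S T : Matrix (Fin n) (Fin n) ℝ) (hS : IsUnit S) (hT : IsUnit T)
    (Pc Pf : Matrix (Fin n) (Fin n) ℝ) :
    (ControlStabilizing E A B C_ Pc ∧ FilterStabilizing E A B C_ R Pf) ↔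
      (ControlStabilizing (S * E * T⁻¹) (S * A * T⁻¹) (S * B) (C_ * T⁻¹)
          ((S⁻¹)ᵀ * Pc * T⁻¹) ∧
        FilterStabilizing (S * E * T⁻¹) (S * A * T⁻¹) (S * B) (C_ * T⁻¹)
          (S * R * Sᵀ) (S * Pf * Tᵀ)) := by
  have hSd : IsUnit S.det := (Matrix.isUnit_iff_isUnit_det S).mp hS
  have hTd : IsUnit T.det := (Matrix.isUnit_iff_isUnit_det T).mp hT
  have hSd' : IsUnit (S⁻¹).det := Matrix.isUnit_nonsing_inv_det S hSd
  have hTd' : IsUnit (T⁻¹).det := Matrix.isUnit_nonsing_inv_det T hTd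
  constructor
  · rintro ⟨hc, hf⟩
    exact ⟨control_fwd E A B C_ Pc S T hSd hTd hc, filter_fwd E A B C_ R Pf S T hSd hTd hf⟩
  · rintro ⟨hc, hf⟩
    have hc' := control_fwd _ _ _ _ _ S⁻¹ T⁻¹ hSd' hTd' hc
    have hf' := filter_fwd _ _ _ _ _ _ S⁻¹ T⁻¹ hSd' hTd' hf
    have hTT : T⁻¹⁻¹ = T := Matrix.nonsing_inv_nonsing_inv T hTd
    have hSS : S⁻¹⁻¹ = S := Matrix.nonsing_inv_nonsing_inv S hSd
    have cS : S⁻¹ * S = 1 := Matrix.nonsing_inv_mul S hSd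
    have cS2 : S * S⁻¹ = 1 := Matrix.mul_nonsing_inv S hSd
    have cT : T⁻¹ * T = 1 := Matrix.nonsing_inv_mul T hTd
    have cT2 : T * T⁻¹ = 1 := Matrix.mul_nonsing_inv T hTd
    have cS2' : Sᵀ * (S⁻¹)ᵀ = 1 := by
      rw [← Matrix.transpose_mul, cS, Matrix.transpose_one]
    have cT2' : Tᵀ * (T⁻¹)ᵀ = 1 := by
      rw [← Matrix.transpose_mul, cT, Matrix.transpose_one]
    have aSl : ∀ {k : ℕ} (Y : Matrix (Fin n) (Fin k) ℝ), S⁻¹ * (S * Y) = Y := fun Y => by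
      rw [← Matrix.mul_assoc, cS, Matrix.one_mul]
    have aSl' : ∀ {k : ℕ} (Y : Matrix (Fin n) (Fin k) ℝ), Sᵀ * ((S⁻¹)ᵀ * Y) = Y := fun Y => by
      rw [← Matrix.mul_assoc, cS2', Matrix.one_mul]
    have aTl : ∀ {k : ℕ} (Y : Matrix (Fin n) (Fin k) ℝ), T⁻¹ * (T * Y) = Y := fun Y => by
      rw [← Matrix.mul_assoc, cT, Matrix.one_mul]
    have eE : S⁻¹ * (S * E * T⁻¹) * T⁻¹⁻¹ = E := by
      simp [hTT, Matrix.mul_assoc, aSl, cT, cS]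
    have eA : S⁻¹ * (S * A * T⁻¹) * T⁻¹⁻¹ = A := by
      simp [hTT, Matrix.mul_assoc, aSl, cT, cS]
    have eB : S⁻¹ * (S * B) = B := aSl B
    have eC : C_ * T⁻¹ * T⁻¹⁻¹ = C_ := by
      simp [hTT, Matrix.mul_assoc, cT]
    have ePc : (S⁻¹⁻¹)ᵀ * ((S⁻¹)ᵀ * Pc * T⁻¹) * T⁻¹⁻¹ = Pc := by
      simp [hTT, hSS, Matrix.mul_assoc, aSl', cT]
    have eR : S⁻¹ * (S * R * Sᵀ) * (S⁻¹)ᵀ = R := by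
      simp [Matrix.mul_assoc, aSl, cS2']
    have ePf : S⁻¹ * (S * Pf * Tᵀ) * (T⁻¹)ᵀ = Pf := by
      simp [Matrix.mul_assoc, aSl, cT2']
    rw [eE, eA, eB, eC, ePc] at hc'
    rw [eE, eA, eB, eC, eR, ePf] at hf'
    exact ⟨hc', hf'⟩
end
end

section
/- Consider a port-Hamiltonian descriptor system given by E, J, R, Q ∈ ℝ^{n×n} and B ∈ ℝ^{n×m} with Jᵀ = −J, R = Rᵀ positive semidefinite, EᵀQ = QᵀE positive semidefinite, A := (J−R)Q, C := BᵀQ. Assume the pencil (E,A) is regular, (E,A,B) is strongly stabilizable, and (E,A,C) is strongly detectable. Then any two stabilizing solutions 𝒫c,1, 𝒫c,2 of the control GARE Aᵀ𝒫c + 𝒫cᵀA − 𝒫cᵀBBᵀ𝒫c + CᵀC = 0, Eᵀ𝒫c = 𝒫cᵀE satisfy Eᵀ𝒫c,1 = Eᵀ𝒫c,2, and any two stabilizing solutions 𝒫f,1, 𝒫f,2 of the modified filter GARE A𝒫fᵀ + 𝒫fAᵀ − 𝒫fCᵀC𝒫fᵀ + BBᵀ + 2R = 0, E𝒫fᵀ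 = 𝒫fEᵀ satisfy E𝒫f,1ᵀ = E𝒫f,2ᵀ. -/
open Matrix

noncomputable section

section GareAux

open Polynomial

variable {N : ℕ}

private lemma card_le_rank_of_rows_li (E : Matrix (Fin N) (Fin N) ℝ)
    (s : Finset (Fin N)) (h : LinearIndependent ℝ (fun i : s => E (i : Fin N))) :
    s.card ≤ E.rank := by
  classical
  set W := Submodule.span ℝ (Set.range E) with hW
  have hmem : ∀ i : s, E (i : Fin N) ∈ W := fun i => Submodule.subset_span ⟨(i : Fin N), rfl⟩
  let u : s → W := fun i => ⟨E (i : Fin N), hmem i⟩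
  have hu : LinearIndependent ℝ u :=
    LinearIndependent.of_comp W.subtype (by exact h)
  have hcard := hu.fintype_card_le_finrank
  rw [Fintype.card_coe] at hcard
  rw [Matrix.rank_eq_finrank_span_row E]
  exact hcard

private lemma det_piecewise_eq_zero (E F : Matrix (Fin N) (Fin N) ℝ) (s : Finset (Fin N))
    (hs : E.rank < s.card) :
    (Matrix.of (s.piecewise (fun i => E i) (fun i => F i))).det = 0 := by
  classical
  by_contra hdet
  have hunit : IsUnit (Matrix.of (s.piecewise (fun i => E i) (fun i => F i))) :=
    (Matrix.isUnit_iff_isUnit_det _).2 (isUnit_iff_ne_zero.2 hdet)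
  have hrows := Matrix.linearIndependent_rows_iff_isUnit.2 hunit
  have hsub : LinearIndependent ℝ
      (fun i : s => (Matrix.of (s.piecewise (fun i => E i) (fun i => F i))) (i : Fin N)) :=
    hrows.comp (Subtype.val : s → Fin N) Subtype.val_injective
  have heq : (fun i : s => (Matrix.of (s.piecewise (fun i => E i) (fun i => F i))) (i : Fin N))
      = fun i : s => E (i : Fin N) := by
    funext i
    exact Finset.piecewise_eq_of_mem _ _ _ i.2
  rw [heq] at hsub
  exact absurd (card_le_rank_of_rows_li E s hsub) (not_le.2 hs)

private lemma det_X_smul_add_expand (E F : Matrix (Fin N) (Fin N) ℝ) :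
    ((X : ℝ[X]) • E.map (C : ℝ → ℝ[X]) + F.map C).det
      = ∑ s : Finset (Fin N),
          X ^ s.card * C ((Matrix.of (s.piecewise (fun i => E i) (fun i => F i))).det) := by
  classical
  set f := (Matrix.detRowAlternating : (Fin N → ℝ[X]) [⋀^Fin N]→ₗ[ℝ[X]] ℝ[X])
  have h0 : ((X : ℝ[X]) • E.map (C : ℝ → ℝ[X]) + F.map C).det
      = f.toMultilinearMap ((fun i => (X : ℝ[X]) • (E.map (C : ℝ → ℝ[X])) i)
          + fun i => (F.map C) i) := rfl
  rw [h0, f.toMultilinearMap.map_add_univ]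
  refine Finset.sum_congr rfl fun s _ => ?_
  have harg : s.piecewise (fun i => (X : ℝ[X]) • (E.map (C : ℝ → ℝ[X])) i) (fun i => (F.map C) i)
      = s.piecewise
          (fun i => (X : ℝ[X]) •
            (s.piecewise (fun i => (E.map (C : ℝ → ℝ[X])) i) (fun i => (F.map C) i)) i)
          (s.piecewise (fun i => (E.map (C : ℝ → ℝ[X])) i) (fun i => (F.map C) i)) := by
    funext i
    by_cases hi : i ∈ s
    · simp [Finset.piecewise_eq_of_mem _ _ _ hi]
    · simp [Finset.piecewise_eq_of_notMem _ _ _ hi]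
  have hsmul := f.toMultilinearMap.map_piecewise_smul (fun _ => (X : ℝ[X]))
      (s.piecewise (fun i => (E.map (C : ℝ → ℝ[X])) i) (fun i => (F.map C) i)) s
  have hmix : (s.piecewise (fun i => (E.map (C : ℝ → ℝ[X])) i) (fun i => (F.map C) i))
      = (Matrix.of (s.piecewise (fun i => E i) (fun i => F i))).map (C : ℝ → ℝ[X]) := by
    funext i j
    by_cases hi : i ∈ s
    · simp [Finset.piecewise_eq_of_mem _ _ _ hi, Matrix.map_apply]
    · simp [Finset.piecewise_eq_of_notMem _ _ _ hi, Matrix.map_apply]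
  have hdetmix : f.toMultilinearMap
        (s.piecewise (fun i => (E.map (C : ℝ → ℝ[X])) i) (fun i => (F.map C) i))
      = C ((Matrix.of (s.piecewise (fun i => E i) (fun i => F i))).det) := by
    rw [hmix]
    exact ((Polynomial.C : ℝ →+* ℝ[X]).map_det _).symm
  calc f.toMultilinearMap
        (s.piecewise (fun i => (X : ℝ[X]) • (E.map (C : ℝ → ℝ[X])) i) (fun i => (F.map C) i))
      = (∏ _i ∈ s, (X : ℝ[X])) •
          f.toMultilinearMap
            (s.piecewise (fun i => (E.map (C : ℝ → ℝ[X])) i) (fun i => (F.map C) i)) := by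
        rw [harg]; exact hsmul
    _ = X ^ s.card * C ((Matrix.of (s.piecewise (fun i => E i) (fun i => F i))).det) := by
        rw [hdetmix, Finset.prod_const, smul_eq_mul]

private lemma natDegree_det_X_smul_add_le (E F : Matrix (Fin N) (Fin N) ℝ) :
    (((X : ℝ[X]) • E.map (C : ℝ → ℝ[X]) + F.map C).det).natDegree ≤ E.rank := by
  classical
  rw [det_X_smul_add_expand]
  refine natDegree_sum_le_of_forall_le _ _ fun s _ => ?_
  by_cases hs : s.card ≤ E.rank
  · refine natDegree_mul_le.trans ?_
    simpa [natDegree_X_pow] using hs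
  · rw [det_piecewise_eq_zero E F s (not_le.1 hs)]
    simp

private lemma rank_updateRow_zero_le (E : Matrix (Fin N) (Fin N) ℝ) (j : Fin N) :
    (E.updateRow j 0).rank ≤ E.rank := by
  classical
  have h : E.updateRow j 0 = (Matrix.diagonal fun i => if i = j then (0 : ℝ) else 1) * E := by
    ext a b
    by_cases hab : a = j
    · subst hab; simp [Matrix.updateRow_self, Matrix.diagonal_mul]
    · simp [Matrix.updateRow_ne hab, Matrix.diagonal_mul, hab]
  rw [h]
  exact Matrix.rank_mul_le_right _ _

/-- Evaluating the pencil polynomial `det (X•E - F)` at a complex number. -/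
private lemma eval_pencil_sub (E F : Matrix (Fin N) (Fin N) ℝ) (z : ℂ) :
    ((pencilPoly E F).map (algebraMap ℝ ℂ)).eval z = (z • E.toC - F.toC).det := by
  rw [Polynomial.eval_map]
  have h0 : Polynomial.eval₂ (algebraMap ℝ ℂ) z (pencilPoly E F)
      = (Polynomial.eval₂RingHom (algebraMap ℝ ℂ) z)
          (((X : ℝ[X]) • E.map (C : ℝ → ℝ[X]) - F.map C).det) := rfl
  rw [h0, RingHom.map_det]
  congr 1
  ext i j
  simp only [RingHom.mapMatrix_apply, Matrix.map_apply, Matrix.sub_apply, Matrix.smul_apply,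
    Matrix.toC, smul_eq_mul, coe_eval₂RingHom, eval₂_sub, eval₂_mul, eval₂_X, eval₂_C]

private lemma eval_pencil_add (E F : Matrix (Fin N) (Fin N) ℝ) (z : ℂ) :
    ((((X : ℝ[X]) • E.map (C : ℝ → ℝ[X]) + F.map C).det).map (algebraMap ℝ ℂ)).eval z
      = (z • E.toC + F.toC).det := by
  rw [Polynomial.eval_map]
  have h0 : Polynomial.eval₂ (algebraMap ℝ ℂ) z (((X : ℝ[X]) • E.map (C : ℝ → ℝ[X]) + F.map C).det)
      = (Polynomial.eval₂RingHom (algebraMap ℝ ℂ) z)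
          (((X : ℝ[X]) • E.map (C : ℝ → ℝ[X]) + F.map C).det) := rfl
  rw [h0, RingHom.map_det]
  congr 1
  ext i j
  simp only [RingHom.mapMatrix_apply, Matrix.map_apply, Matrix.add_apply, Matrix.smul_apply,
    Matrix.toC, smul_eq_mul, coe_eval₂RingHom, eval₂_add, eval₂_mul, eval₂_X, eval₂_C]

private lemma pencilPoly_comp_neg_X (E F : Matrix (Fin N) (Fin N) ℝ) :
    (pencilPoly E F).comp (-X)
      = (-1 : ℝ[X]) ^ N * ((X : ℝ[X]) • E.map (C : ℝ → ℝ[X]) + F.map C).det := by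
  have h0 : (pencilPoly E F).comp (-X)
      = (Polynomial.eval₂RingHom (Polynomial.C : ℝ →+* ℝ[X]) (-X))
          (((X : ℝ[X]) • E.map (C : ℝ → ℝ[X]) - F.map C).det) := rfl
  rw [h0, RingHom.map_det]
  have hmat : (((X : ℝ[X]) • E.map (C : ℝ → ℝ[X]) - F.map C)).map
        (Polynomial.eval₂RingHom (Polynomial.C : ℝ →+* ℝ[X]) (-X))
      = -((X : ℝ[X]) • E.map (C : ℝ → ℝ[X]) + F.map C) := by
    ext i j
    simp [Matrix.map_apply, Matrix.sub_apply, Matrix.add_apply, Matrix.neg_apply,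
      Matrix.smul_apply, smul_eq_mul]
    ring
  rw [RingHom.mapMatrix_apply, hmat, Matrix.det_neg, Fintype.card_fin]

private lemma pencilPoly_ne_zero (E F : Matrix (Fin N) (Fin N) ℝ) (h : PencilRegular E F) :
    pencilPoly E F ≠ 0 := by
  obtain ⟨s, hs⟩ := h
  intro h0
  apply hs
  rw [← eval_pencil_sub, h0]
  simp

private lemma q_ne_zero (E F : Matrix (Fin N) (Fin N) ℝ) (h : PencilRegular E F) :
    ((X : ℝ[X]) • E.map (C : ℝ → ℝ[X]) + F.map C).det ≠ 0 := by
  obtain ⟨s, hs⟩ := h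
  intro h0
  apply hs
  have hev := eval_pencil_add E F (-s)
  rw [h0] at hev
  have hneg : (-s) • E.toC + F.toC = -(s • E.toC - F.toC) := by
    rw [neg_smul]; abel
  rw [hneg, Matrix.det_neg] at hev
  simp only [Polynomial.map_zero, Polynomial.eval_zero] at hev
  have hunit : ((-1 : ℂ) ^ Fintype.card (Fin N)) ≠ 0 := by
    simp [pow_ne_zero]
  exact (mul_eq_zero.1 hev.symm).resolve_left hunit

private lemma q_natDegree (E F : Matrix (Fin N) (Fin N) ℝ) (himp : PencilImpulseFree E F) :
    (((X : ℝ[X]) • E.map (C : ℝ → ℝ[X]) + F.map C).det).natDegree = E.rank := by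
  have hcomp := pencilPoly_comp_neg_X E F
  have h1 : ((pencilPoly E F).comp (-X)).natDegree = (pencilPoly E F).natDegree := by
    rw [Polynomial.natDegree_comp]
    simp
  have hC : ((-1 : ℝ[X]) ^ N) = C ((-1 : ℝ) ^ N) := by
    simp
  have h2 : ((-1 : ℝ[X]) ^ N * ((X : ℝ[X]) • E.map (C : ℝ → ℝ[X]) + F.map C).det).natDegree
      = (((X : ℝ[X]) • E.map (C : ℝ → ℝ[X]) + F.map C).det).natDegree := by
    rw [hC, Polynomial.natDegree_C_mul (pow_ne_zero _ (by norm_num))]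
  rw [hcomp, h2] at h1
  rw [h1]
  exact himp

private lemma coprime_of_stable (E F1 F2 : Matrix (Fin N) (Fin N) ℝ)
    (h1 : PencilStable E F1) (h2 : PencilStable E F2) :
    IsCoprime (pencilPoly E F1) (((X : ℝ[X]) • E.map (C : ℝ → ℝ[X]) + F2.map C).det) := by
  classical
  set p : ℝ[X] := pencilPoly E F1 with hp
  set q : ℝ[X] := ((X : ℝ[X]) • E.map (C : ℝ → ℝ[X]) + F2.map C).det with hq
  have hpne : p ≠ 0 := pencilPoly_ne_zero E F1 h1.1
  rw [← Polynomial.isCoprime_map (algebraMap ℝ ℂ)]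
  by_contra hnc
  set d := EuclideanDomain.gcd (p.map (algebraMap ℝ ℂ)) (q.map (algebraMap ℝ ℂ)) with hd
  have hdunit : ¬ IsUnit d := fun h => hnc (EuclideanDomain.gcd_isUnit_iff.1 h)
  have hd0 : d ≠ 0 := by
    intro h0
    have := (EuclideanDomain.gcd_eq_zero_iff.1 h0).1
    exact (Polynomial.map_ne_zero hpne) this
  have hdeg : d.degree ≠ 0 := fun h => hdunit (Polynomial.isUnit_iff_degree_eq_zero.2 h)
  obtain ⟨z, hz⟩ := Complex.isAlgClosed.exists_root d hdeg
  have hzp : (p.map (algebraMap ℝ ℂ)).eval z = 0 := by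
    obtain ⟨e, he⟩ := EuclideanDomain.gcd_dvd_left (p.map (algebraMap ℝ ℂ))
      (q.map (algebraMap ℝ ℂ))
    rw [he, Polynomial.eval_mul, hz, zero_mul]
  have hzq : (q.map (algebraMap ℝ ℂ)).eval z = 0 := by
    obtain ⟨e, he⟩ := EuclideanDomain.gcd_dvd_right (p.map (algebraMap ℝ ℂ))
      (q.map (algebraMap ℝ ℂ))
    rw [he, Polynomial.eval_mul, hz, zero_mul]
  have hre1 : z.re < 0 := by
    apply h1.2.2 z
    unfold PencilFiniteEig
    rw [← eval_pencil_sub]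
    exact hzp
  have hre2 : (0 : ℝ) < z.re := by
    have hev := eval_pencil_add E F2 z
    rw [hzq] at hev
    have hneg : z • E.toC + F2.toC = -((-z) • E.toC - F2.toC) := by
      rw [neg_smul]; abel
    rw [hneg, Matrix.det_neg] at hev
    have hunit : ((-1 : ℂ) ^ Fintype.card (Fin N)) ≠ 0 := by
      simp [pow_ne_zero]
    have : ((-z) • E.toC - F2.toC).det = 0 :=
      (mul_eq_zero.1 hev.symm).resolve_left hunit
    have := h2.2.2 (-z) this
    simpa using this
  linarith

/-- Transposing preserves pencil stability. -/
private lemma PencilStable.transpose_pencil {E F : Matrix (Fin N) (Fin N) ℝ}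
    (h : PencilStable E F) : PencilStable Eᵀ Fᵀ := by
  have hdet : ∀ z : ℂ, (z • Eᵀ.toC - Fᵀ.toC).det = (z • E.toC - F.toC).det := by
    intro z
    have hmat : z • Eᵀ.toC - Fᵀ.toC = (z • E.toC - F.toC)ᵀ := by
      ext i j
      simp [Matrix.toC, Matrix.map_apply, Matrix.transpose_apply, Matrix.sub_apply,
        Matrix.smul_apply]
    rw [hmat, Matrix.det_transpose]
  refine ⟨?_, ?_, ?_⟩
  · obtain ⟨s, hs⟩ := h.1
    exact ⟨s, by rw [hdet]; exact hs⟩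
  · unfold PencilImpulseFree pencilPoly
    have hmat : (X : ℝ[X]) • Eᵀ.map (C : ℝ → ℝ[X]) - Fᵀ.map C
        = ((X : ℝ[X]) • E.map (C : ℝ → ℝ[X]) - F.map C)ᵀ := by
      ext i j
      simp [Matrix.map_apply, Matrix.transpose_apply, Matrix.sub_apply, Matrix.smul_apply]
    rw [hmat, Matrix.det_transpose, Matrix.rank_transpose]
    exact h.2.1
  · intro lam hl
    apply h.2.2 lam
    unfold PencilFiniteEig at hl ⊢
    rw [← hdet]
    exact hl

/-- The key uniqueness lemma: a solution `Δ` of the generalized Sylvester equation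
`F2ᵀ Δ + Δᵀ F1 = 0` with `Eᵀ Δ` symmetric and both pencils stable satisfies `Eᵀ Δ = 0`. -/
private lemma key_sylvester (E F1 F2 Δ : Matrix (Fin N) (Fin N) ℝ)
    (h1 : F2ᵀ * Δ + Δᵀ * F1 = 0) (h2 : Eᵀ * Δ = Δᵀ * E)
    (hs1 : PencilStable E F1) (hs2 : PencilStable E F2) : Eᵀ * Δ = 0 := by
  classical
  set φ := (Polynomial.C : ℝ →+* ℝ[X]).mapMatrix
      (m := Fin N) with hφ
  have hφapp : ∀ (M : Matrix (Fin N) (Fin N) ℝ) i j, φ M i j = C (M i j) := by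
    intro M i j; simp [hφ, RingHom.mapMatrix_apply, Matrix.map_apply]
  have hφmap : ∀ M : Matrix (Fin N) (Fin N) ℝ, φ M = M.map (C : ℝ → ℝ[X]) := by
    intro M; rfl
  have hφT : ∀ M : Matrix (Fin N) (Fin N) ℝ, (φ M)ᵀ = φ Mᵀ := by
    intro M
    rw [hφmap, hφmap, Matrix.transpose_map]
  set L1 : Matrix (Fin N) (Fin N) ℝ[X] := (X : ℝ[X]) • φ E - φ F1 with hL1
  set L2 : Matrix (Fin N) (Fin N) ℝ[X] := (X : ℝ[X]) • φ E + φ F2 with hL2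
  set p : ℝ[X] := pencilPoly E F1 with hp
  set q : ℝ[X] := L2.det with hq
  have hpdet : p = L1.det := rfl
  have hpne : p ≠ 0 := pencilPoly_ne_zero E F1 hs1.1
  have hqne : q ≠ 0 := q_ne_zero E F2 hs2.1
  have hpdeg : p.natDegree = E.rank := hs1.2.1
  have hqdeg : q.natDegree = E.rank := q_natDegree E F2 hs2.2.1
  have hcop : IsCoprime p q := coprime_of_stable E F1 F2 hs1 hs2
  -- transpose of the first pencil
  have hL1T : L1ᵀ = (X : ℝ[X]) • φ Eᵀ - φ F1ᵀ := by
    rw [hL1, Matrix.transpose_sub, Matrix.transpose_smul, hφT, hφT]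
  -- the key polynomial identity
  have h1' : F1ᵀ * Δ = -(Δᵀ * F2) := by
    have h1t := congrArg Matrix.transpose h1
    simp only [Matrix.transpose_add, Matrix.transpose_mul,
      Matrix.transpose_transpose, Matrix.transpose_zero] at h1t
    -- h1t : Δᵀ * F2 + F1ᵀ * Δ = 0
    exact eq_neg_of_add_eq_zero_right h1t
  have hid : L1ᵀ * φ Δ = (φ Δ)ᵀ * L2 := by
    rw [hL1T, hφT, hL2]
    rw [Matrix.sub_mul, Matrix.smul_mul, Matrix.mul_add, Matrix.mul_smul]
    rw [← map_mul φ, ← map_mul φ, ← map_mul φ, ← map_mul φ]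
    rw [h2, h1', map_neg, sub_neg_eq_add]
  -- multiply by adjugates on both sides
  have hmain : p • (φ Δ * L2.adjugate) = q • (L1ᵀ.adjugate * (φ Δ)ᵀ) := by
    calc p • (φ Δ * L2.adjugate)
        = (L1ᵀ.det) • (φ Δ * L2.adjugate) := by rw [Matrix.det_transpose, ← hpdet]
      _ = ((L1ᵀ.adjugate * L1ᵀ) * (φ Δ * L2.adjugate)) := by
          rw [Matrix.adjugate_mul, Matrix.smul_mul, Matrix.one_mul]
      _ = L1ᵀ.adjugate * (L1ᵀ * φ Δ) * L2.adjugate := by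
          rw [Matrix.mul_assoc, Matrix.mul_assoc, Matrix.mul_assoc]
      _ = L1ᵀ.adjugate * ((φ Δ)ᵀ * L2) * L2.adjugate := by rw [hid]
      _ = (L1ᵀ.adjugate * (φ Δ)ᵀ) * (L2 * L2.adjugate) := by
          rw [Matrix.mul_assoc, Matrix.mul_assoc, Matrix.mul_assoc]
      _ = q • (L1ᵀ.adjugate * (φ Δ)ᵀ) := by
          rw [Matrix.mul_adjugate, Matrix.mul_smul, Matrix.mul_one]
  have hMN : ∀ i j, p * (φ Δ * L2.adjugate) i j = q * (L1ᵀ.adjugate * (φ Δ)ᵀ) i j := by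
    intro i j
    have := congrArg (fun M => M i j) hmain
    simpa [Matrix.smul_apply, smul_eq_mul] using this
  -- degree bounds for the adjugate entries
  have hadj2 : ∀ i j, ((L2.adjugate) i j).natDegree ≤ E.rank := by
    intro i j
    rw [Matrix.adjugate_apply]
    have hupd : L2.updateRow j (Pi.single i 1)
        = (X : ℝ[X]) • (E.updateRow j 0).map (C : ℝ → ℝ[X])
            + (F2.updateRow j (Pi.single i 1)).map C := by
      refine Matrix.ext fun a b => ?_
      by_cases hab : a = j
      · subst hab
        simp [Matrix.updateRow_self, Matrix.add_apply, Matrix.smul_apply, Matrix.map_apply,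
          Pi.single_apply, apply_ite (C : ℝ → ℝ[X])]
      · simp [Matrix.updateRow_ne hab, hL2, Matrix.add_apply, Matrix.smul_apply,
          Matrix.map_apply, hφapp]
    rw [hupd]
    exact (natDegree_det_X_smul_add_le _ _).trans (rank_updateRow_zero_le E j)
  have hadj1 : ∀ i j, ((L1ᵀ.adjugate) i j).natDegree ≤ E.rank := by
    intro i j
    rw [Matrix.adjugate_apply]
    have hupd : (L1ᵀ).updateRow j (Pi.single i 1)
        = (X : ℝ[X]) • (Eᵀ.updateRow j 0).map (C : ℝ → ℝ[X])
            + ((-F1ᵀ).updateRow j (Pi.single i 1)).map C := by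
      refine Matrix.ext fun a b => ?_
      by_cases hab : a = j
      · subst hab
        simp [Matrix.updateRow_self, Matrix.add_apply, Matrix.smul_apply, Matrix.map_apply,
          Pi.single_apply, apply_ite (C : ℝ → ℝ[X])]
      · simp [Matrix.updateRow_ne hab, hL1T, Matrix.sub_apply, Matrix.add_apply,
          Matrix.smul_apply, Matrix.map_apply, Matrix.neg_apply, hφapp, sub_eq_add_neg]
    rw [hupd]
    refine (natDegree_det_X_smul_add_le _ _).trans ?_
    calc (Eᵀ.updateRow j 0).rank ≤ Eᵀ.rank := rank_updateRow_zero_le Eᵀ j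
      _ = E.rank := Matrix.rank_transpose E
  have hdegM : ∀ i j, ((φ Δ * L2.adjugate) i j).natDegree ≤ E.rank := by
    intro i j
    rw [Matrix.mul_apply]
    refine natDegree_sum_le_of_forall_le _ _ fun k _ => natDegree_mul_le.trans ?_
    rw [hφapp, natDegree_C, zero_add]
    exact hadj2 k j
  -- construct the constant matrix N0
  have hgen : ∀ i j, ∃ c : ℝ, (L1ᵀ.adjugate * (φ Δ)ᵀ) i j = p * C c
      ∧ (φ Δ * L2.adjugate) i j = q * C c := by
    intro i j
    have hdvd : p ∣ (L1ᵀ.adjugate * (φ Δ)ᵀ) i j := by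
      apply hcop.dvd_of_dvd_mul_left
      exact ⟨(φ Δ * L2.adjugate) i j, by rw [← hMN i j]⟩
    obtain ⟨g, hg⟩ := hdvd
    have hMg : (φ Δ * L2.adjugate) i j = q * g := by
      have h' : p * (φ Δ * L2.adjugate) i j = p * (q * g) := by
        rw [hMN i j, hg]; ring
      exact mul_left_cancel₀ hpne h'
    by_cases hg0 : g = 0
    · exact ⟨0, by simp [hg, hg0], by simp [hMg, hg0]⟩
    · have hdg : g.natDegree = 0 := by
        have hle := hdegM i j
        rw [hMg, natDegree_mul hqne hg0, hqdeg] at hle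
        omega
      obtain ⟨c, hc⟩ := Polynomial.natDegree_eq_zero.1 hdg
      exact ⟨c, by rw [hg, ← hc], by rw [hMg, ← hc]⟩
  choose N0 hN01 hN02 using hgen
  have hNmat : L1ᵀ.adjugate * (φ Δ)ᵀ = p • φ (Matrix.of N0) := by
    refine Matrix.ext fun i j => ?_
    rw [Matrix.smul_apply, hφapp, smul_eq_mul]
    exact hN01 i j
  have hMmat : φ Δ * L2.adjugate = q • φ (Matrix.of N0) := by
    refine Matrix.ext fun i j => ?_
    rw [Matrix.smul_apply, hφapp, smul_eq_mul]
    exact hN02 i j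
  have hcancel : ∀ (A B : Matrix (Fin N) (Fin N) ℝ[X]) (s : ℝ[X]), s ≠ 0 →
      s • A = s • B → A = B := by
    intro A B s hs h
    refine Matrix.ext fun i j => ?_
    have := congrArg (fun M => M i j) h
    simp only [Matrix.smul_apply, smul_eq_mul] at this
    exact mul_left_cancel₀ hs this
  -- the two linear matrix equations
  have heq1 : L1ᵀ * φ (Matrix.of N0) = φ Δᵀ := by
    apply hcancel _ _ p hpne
    calc p • (L1ᵀ * φ (Matrix.of N0)) = L1ᵀ * (p • φ (Matrix.of N0)) :=
          (Matrix.mul_smul _ _ _).symm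
      _ = L1ᵀ * (L1ᵀ.adjugate * (φ Δ)ᵀ) := by rw [hNmat]
      _ = (L1ᵀ * L1ᵀ.adjugate) * (φ Δ)ᵀ := by rw [Matrix.mul_assoc]
      _ = (L1ᵀ.det) • (φ Δ)ᵀ := by rw [Matrix.mul_adjugate, Matrix.smul_mul, Matrix.one_mul]
      _ = p • φ Δᵀ := by rw [Matrix.det_transpose, ← hpdet, hφT]
  have heq2 : φ (Matrix.of N0) * L2 = φ Δ := by
    apply hcancel _ _ q hqne
    calc q • (φ (Matrix.of N0) * L2) = (q • φ (Matrix.of N0)) * L2 :=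
          (Matrix.smul_mul _ _ _).symm
      _ = (φ Δ * L2.adjugate) * L2 := by rw [hMmat]
      _ = φ Δ * (L2.adjugate * L2) := by rw [Matrix.mul_assoc]
      _ = q • φ Δ := by rw [Matrix.adjugate_mul, Matrix.mul_smul, Matrix.mul_one]
  -- extract coefficients
  have heq1' : (X : ℝ[X]) • φ (Eᵀ * Matrix.of N0) - φ (F1ᵀ * Matrix.of N0) = φ Δᵀ := by
    rw [map_mul φ, map_mul φ, ← heq1, hL1T, Matrix.sub_mul, Matrix.smul_mul]
  have heq2' : (X : ℝ[X]) • φ (Matrix.of N0 * E) + φ (Matrix.of N0 * F2) = φ Δ := by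
    rw [map_mul φ, map_mul φ, ← heq2, hL2, Matrix.mul_add, Matrix.mul_smul]
  have hEN0 : Eᵀ * Matrix.of N0 = 0 := by
    refine Matrix.ext fun i j => ?_
    have hc := congrArg (fun M => Polynomial.coeff (M i j) 1) heq1'
    simp only [Matrix.sub_apply, Matrix.smul_apply, hφapp, smul_eq_mul,
      Polynomial.coeff_sub, Polynomial.coeff_X_mul, Polynomial.coeff_C] at hc
    simpa using hc
  have hN0F2 : Matrix.of N0 * F2 = Δ := by
    refine Matrix.ext fun i j => ?_
    have hc := congrArg (fun M => Polynomial.coeff (M i j) 0) heq2'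
    simp only [Matrix.add_apply, Matrix.smul_apply, hφapp, smul_eq_mul,
      Polynomial.coeff_add, Polynomial.mul_coeff_zero, Polynomial.coeff_X_zero,
      Polynomial.coeff_C_zero, zero_mul, zero_add] at hc
    exact hc
  -- conclude
  calc Eᵀ * Δ = Δᵀ * E := h2
    _ = (Matrix.of N0 * F2)ᵀ * E := by rw [hN0F2]
    _ = F2ᵀ * ((Matrix.of N0)ᵀ * E) := by rw [Matrix.transpose_mul, Matrix.mul_assoc]
    _ = F2ᵀ * (Eᵀ * Matrix.of N0)ᵀ := by rw [Matrix.transpose_mul, Matrix.transpose_transpose]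
    _ = 0 := by rw [hEN0, Matrix.transpose_zero, Matrix.mul_zero]

end GareAux

/-- Theorem `thm:solutionsOfNonsymmetricGAREs` (ii): any two
stabilizing solutions of the control GARE (resp. modified filter GARE) give the same
product `Eᵀ𝒫c` (resp. `E𝒫fᵀ`). -/
theorem gare_stabilizing_solutions_unique
    {n m : ℕ} (E J R Q : Matrix (Fin n) (Fin n) ℝ) (B : Matrix (Fin n) (Fin m) ℝ)
    (A C_ : _) (hA : A = (J - R) * Q) (hC : C_ = Bᵀ * Q)
    (hJ : Jᵀ = -J) (hR : R.PosSemidef) (hEQ : (Eᵀ * Q).PosSemidef)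
    (hreg : PencilRegular E A)
    (hstab : StronglyStabilizable E A B)
    (hdet : StronglyDetectable E A C_) :
    (∀ Pc₁ Pc₂ : Matrix (Fin n) (Fin n) ℝ,
        ControlStabilizing E A B C_ Pc₁ → ControlStabilizing E A B C_ Pc₂ →
        Eᵀ * Pc₁ = Eᵀ * Pc₂) ∧
      (∀ Pf₁ Pf₂ : Matrix (Fin n) (Fin n) ℝ,
        FilterStabilizing E A B C_ R Pf₁ → FilterStabilizing E A B C_ R Pf₂ →
        E * Pf₁ᵀ = E * Pf₂ᵀ) := by
  constructor
  · rintro P1 P2 ⟨⟨e1, eE1⟩, st1⟩ ⟨⟨e2, eE2⟩, st2⟩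
    have h1 : (A - B * Bᵀ * P2)ᵀ * (P1 - P2) + (P1 - P2)ᵀ * (A - B * Bᵀ * P1) = 0 := by
      have hc : (A - B * Bᵀ * P2)ᵀ * (P1 - P2) + (P1 - P2)ᵀ * (A - B * Bᵀ * P1)
          = (Aᵀ * P1 + P1ᵀ * A - P1ᵀ * B * Bᵀ * P1 + C_ᵀ * C_)
            - (Aᵀ * P2 + P2ᵀ * A - P2ᵀ * B * Bᵀ * P2 + C_ᵀ * C_) := by
        simp only [Matrix.transpose_sub, Matrix.transpose_mul, Matrix.transpose_transpose]
        simp only [Matrix.sub_mul, Matrix.mul_sub, Matrix.mul_assoc]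
        abel
      rw [hc, e1, e2, sub_zero]
    have h2 : Eᵀ * (P1 - P2) = (P1 - P2)ᵀ * E := by
      rw [Matrix.mul_sub, Matrix.transpose_sub, Matrix.sub_mul, eE1, eE2]
    have h0 := key_sylvester E (A - B * Bᵀ * P1) (A - B * Bᵀ * P2) (P1 - P2) h1 h2 st1 st2
    rw [Matrix.mul_sub] at h0
    exact sub_eq_zero.1 h0
  · rintro P1 P2 ⟨⟨e1, eE1⟩, st1⟩ ⟨⟨e2, eE2⟩, st2⟩
    have e1' : A * P1ᵀ + P1 * Aᵀ - P1 * C_ᵀ * C_ * P1ᵀ + B * Bᵀ = -((2 : ℝ) • R) :=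
      eq_neg_of_add_eq_zero_left e1
    have e2' : A * P2ᵀ + P2 * Aᵀ - P2 * C_ᵀ * C_ * P2ᵀ + B * Bᵀ = -((2 : ℝ) • R) :=
      eq_neg_of_add_eq_zero_left e2
    have h1 : ((A - P2 * C_ᵀ * C_)ᵀ)ᵀ * (P1 - P2)ᵀ
        + ((P1 - P2)ᵀ)ᵀ * (A - P1 * C_ᵀ * C_)ᵀ = 0 := by
      have hc : ((A - P2 * C_ᵀ * C_)ᵀ)ᵀ * (P1 - P2)ᵀ
            + ((P1 - P2)ᵀ)ᵀ * (A - P1 * C_ᵀ * C_)ᵀ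
          = (A * P1ᵀ + P1 * Aᵀ - P1 * C_ᵀ * C_ * P1ᵀ + B * Bᵀ)
            - (A * P2ᵀ + P2 * Aᵀ - P2 * C_ᵀ * C_ * P2ᵀ + B * Bᵀ) := by
        simp only [Matrix.transpose_sub, Matrix.transpose_mul, Matrix.transpose_transpose]
        simp only [Matrix.sub_mul, Matrix.mul_sub, Matrix.mul_assoc]
        abel
      rw [hc, e1', e2', sub_self]
    have h2 : (Eᵀ)ᵀ * (P1 - P2)ᵀ = ((P1 - P2)ᵀ)ᵀ * Eᵀ := by
      rw [Matrix.transpose_transpose, Matrix.transpose_transpose, Matrix.transpose_sub,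
        Matrix.mul_sub, Matrix.sub_mul, eE1, eE2]
    have h0 := key_sylvester Eᵀ ((A - P1 * C_ᵀ * C_)ᵀ) ((A - P2 * C_ᵀ * C_)ᵀ) ((P1 - P2)ᵀ)
      h1 h2 (PencilStable.transpose_pencil st1) (PencilStable.transpose_pencil st2)
    rw [Matrix.transpose_transpose, Matrix.transpose_sub, Matrix.mul_sub] at h0
    exact sub_eq_zero.1 h0
end
end

section
/- Consider a port-Hamiltonian descriptor system given by E, J, R, Q ∈ ℝ^{n×n} and B ∈ ℝ^{n×m} with Jᵀ = −J, R = Rᵀ positive semidefinite, EᵀQ = QᵀE positive semidefinite, A := (J−R)Q, C := BᵀQ. Assume the pencil (E,A) is regular, (E,A,B) is strongly stabilizable, (E,A,C) is strongly detectable, and Q is invertible. Then Q⁻ᵀ is a stabilizing solution of the modified filter GARE, i.e., AQ⁻¹ + Q⁻ᵀAᵀ − Q⁻ᵀCᵀCQ⁻¹ + BBᵀ + 2R = 0, EQ⁻¹ = Q⁻ᵀEᵀ, and the pencil (E, A − Q⁻ᵀCᵀC) is regular, impulse-free, and all its finite eigenvalues have negative real part. -/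
open Matrix

noncomputable section

section Helpers

open Polynomial
open scoped ComplexOrder

namespace Matrix

lemma toC_apply {k l : Type*} (M : Matrix k l ℝ) (i : k) (j : l) : M.toC i j = (M i j : ℂ) := rfl

lemma toC_mul {k l o : Type*} [Fintype l] (M : Matrix k l ℝ) (N : Matrix l o ℝ) :
    (M * N).toC = M.toC * N.toC := Matrix.map_mul

lemma toC_sub {k l : Type*} (M N : Matrix k l ℝ) : (M - N).toC = M.toC - N.toC := by
  ext i j; simp [toC_apply, Matrix.sub_apply]

lemma toC_neg {k l : Type*} (M : Matrix k l ℝ) : (-M).toC = -M.toC := by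
  ext i j; simp [toC_apply, Matrix.neg_apply]

lemma toC_add {k l : Type*} (M N : Matrix k l ℝ) : (M + N).toC = M.toC + N.toC := by
  ext i j; simp [toC_apply, Matrix.add_apply]

lemma toC_transpose {k l : Type*} (M : Matrix k l ℝ) : Mᵀ.toC = (M.toC)ᵀ := rfl

lemma toC_conjTranspose {k l : Type*} (M : Matrix k l ℝ) : Mᵀ.toC = (M.toC)ᴴ := by
  ext i j
  simp [toC_apply, Matrix.conjTranspose_apply, Complex.conj_ofReal]

lemma det_toC {k : Type*} [Fintype k] [DecidableEq k] (M : Matrix k k ℝ) :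
    M.toC.det = (M.det : ℂ) := by
  have := (RingHom.map_det (algebraMap ℝ ℂ) M).symm
  simpa [RingHom.mapMatrix_apply, Matrix.toC] using this

lemma PosSemidef.toCPSD {k : Type*} [Fintype k] [DecidableEq k] {S : Matrix k k ℝ}
    (hS : S.PosSemidef) : S.toC.PosSemidef := by
  obtain ⟨T, rfl⟩ : ∃ T : Matrix k k ℝ, S = Tᴴ * T := by
    open scoped MatrixOrder in
    obtain ⟨T, hT⟩ := CStarAlgebra.nonneg_iff_eq_star_mul_self.mp hS.nonneg
    exact ⟨T, hT⟩
  rw [Matrix.toC_mul, show (Tᴴ).toC = (T.toC)ᴴ by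
    rw [Matrix.conjTranspose_eq_transpose_of_trivial, Matrix.toC_conjTranspose]]
  exact Matrix.posSemidef_conjTranspose_mul_self _

end Matrix

/-- Full column rank implies trivial kernel. -/
lemma eq_zero_of_rank_eq {F : Type*} [Field F] {m' : Type*} [Fintype m'] {n : ℕ}
    (V : Matrix m' (Fin n) F) (h : V.rank = n) {v : Fin n → F} (hv : V *ᵥ v = 0) : v = 0 := by
  have h1 := LinearMap.finrank_range_add_finrank_ker V.mulVecLin
  rw [Module.finrank_pi, Fintype.card_fin] at h1
  have hr : Module.finrank F (LinearMap.range V.mulVecLin) = n := h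
  have hk0 : Module.finrank F (LinearMap.ker V.mulVecLin) = 0 := by omega
  have hker : LinearMap.ker V.mulVecLin = ⊥ := Submodule.finrank_eq_zero.mp hk0
  have : v ∈ LinearMap.ker V.mulVecLin := by
    simp [LinearMap.mem_ker, Matrix.mulVecLin_apply, hv]
  rw [hker] at this
  simpa using this

/-- The matrix whose columns are the vectors of a basis of a submodule of `Fin n → ℝ`. -/
def colsMatrix {n : ℕ} {K : Submodule ℝ (Fin n → ℝ)} {ι : Type*} (b : Module.Basis ι ℝ K) :
    Matrix (Fin n) ι ℝ := Matrix.of fun i j => (b j : Fin n → ℝ) i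

lemma colsMatrix_mulVec {n : ℕ} {K : Submodule ℝ (Fin n → ℝ)} {ι : Type*} [Fintype ι]
    (b : Module.Basis ι ℝ K) (y : ι → ℝ) :
    colsMatrix b *ᵥ y = ((∑ j, y j • b j : K) : Fin n → ℝ) := by
  ext i
  simp only [Matrix.mulVec, dotProduct, colsMatrix, Matrix.of_apply]
  have hc : ((∑ j, y j • b j : K) : Fin n → ℝ) = ∑ j, y j • ((b j : K) : Fin n → ℝ) := by
    push_cast; rfl
  rw [hc, Finset.sum_apply]
  exact Finset.sum_congr rfl fun j _ => mul_comm _ _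

lemma colsMatrix_mulVec_mem {n : ℕ} {K : Submodule ℝ (Fin n → ℝ)} {ι : Type*} [Fintype ι]
    (b : Module.Basis ι ℝ K) (y : ι → ℝ) : colsMatrix b *ᵥ y ∈ K := by
  rw [colsMatrix_mulVec]; exact (∑ j, y j • b j : K).2

lemma colsMatrix_injective {n : ℕ} {K : Submodule ℝ (Fin n → ℝ)} {ι : Type*} [Fintype ι]
    (b : Module.Basis ι ℝ K) {y : ι → ℝ} (hy : colsMatrix b *ᵥ y = 0) : y = 0 := by
  rw [colsMatrix_mulVec] at hy
  have : (∑ j, y j • b j : K) = 0 := by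
    exact Subtype.coe_injective (by simpa using hy)
  have h2 := Fintype.linearIndependent_iff.mp b.linearIndependent y this
  funext j; exact h2 j

lemma colsMatrix_surj {n : ℕ} {K : Submodule ℝ (Fin n → ℝ)} {ι : Type*} [Fintype ι]
    (b : Module.Basis ι ℝ K) {x : Fin n → ℝ} (hx : x ∈ K) :
    ∃ y : ι → ℝ, colsMatrix b *ᵥ y = x := by
  refine ⟨fun j => b.repr ⟨x, hx⟩ j, ?_⟩
  rw [colsMatrix_mulVec]
  rw [b.sum_repr ⟨x, hx⟩]

/-- Key degree computation: if `ker N ∩ im N = 0` then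
`det (X • N.map C - 1)` has degree `rank N`. -/
lemma natDegree_det_X_smul_sub_one {n : ℕ} (N : Matrix (Fin n) (Fin n) ℝ)
    (hdisj : ∀ u w : Fin n → ℝ, N *ᵥ u = 0 → N *ᵥ w = u → u = 0) :
    ((X : ℝ[X]) • N.map (C : ℝ →+* ℝ[X]) - 1).det.natDegree = N.rank := by
  classical
  set Kr := LinearMap.range N.mulVecLin with hKr
  set Kk := LinearMap.ker N.mulVecLin with hKk
  have hrn := LinearMap.finrank_range_add_finrank_ker N.mulVecLin
  rw [Module.finrank_pi, Fintype.card_fin] at hrn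
  set r := Module.finrank ℝ Kr with hr
  set k := Module.finrank ℝ Kk with hk
  have hrank : N.rank = r := rfl
  have hrk : r + k = n := hrn
  have hinf : Kr ⊓ Kk = ⊥ := by
    rw [Submodule.eq_bot_iff]
    intro u hu
    rw [Submodule.mem_inf] at hu
    obtain ⟨hu1, hu2⟩ := hu
    obtain ⟨w, hw⟩ := hu1
    exact hdisj u w hu2 hw
  have hsup : Kr ⊔ Kk = ⊤ := by
    apply Submodule.eq_top_of_finrank_eq
    have h2 := Submodule.finrank_sup_add_finrank_inf_eq Kr Kk
    rw [hinf] at h2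
    simp only [finrank_bot, add_zero] at h2
    rw [h2, Module.finrank_pi, Fintype.card_fin]
    exact hrk
  let bU : Module.Basis (Fin r) ℝ Kr := Module.finBasis ℝ Kr
  let bS : Module.Basis (Fin k) ℝ Kk := Module.finBasis ℝ Kk
  set U := colsMatrix bU with hU
  set S := colsMatrix bS with hS
  let e : Fin r ⊕ Fin k ≃ Fin n := finSumFinEquiv.trans (finCongr hrk)
  set P := (Matrix.fromCols U S).submatrix id ⇑e.symm with hP
  have hPsurj : Function.Surjective P.mulVec := by
    intro z
    have hz : z ∈ Kr ⊔ Kk := by rw [hsup]; trivial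
    obtain ⟨a, ha, b, hb, rfl⟩ := Submodule.mem_sup.mp hz
    obtain ⟨ya, hya⟩ := colsMatrix_surj bU ha
    obtain ⟨yb, hyb⟩ := colsMatrix_surj bS hb
    refine ⟨(Sum.elim ya yb) ∘ ⇑e.symm, ?_⟩
    show P *ᵥ _ = _
    rw [hP, Matrix.submatrix_mulVec_equiv (Matrix.fromCols U S) _ id e.symm]
    have hcomp : ((Sum.elim ya yb) ∘ ⇑e.symm) ∘ ⇑e.symm.symm = Sum.elim ya yb := by
      funext l; simp
    rw [hcomp]
    funext i
    rw [show (Matrix.fromCols U S *ᵥ Sum.elim ya yb)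
        = U *ᵥ ya + S *ᵥ yb from Matrix.fromCols_mulVec_sumElim U S ya yb]
    simp [hU, hS, hya, hyb]
  have hPunit : IsUnit P := Matrix.mulVec_surjective_iff_isUnit.mp hPsurj
  have hPdet : IsUnit P.det := (Matrix.isUnit_iff_isUnit_det P).mp hPunit
  have hmemN : ∀ j, N *ᵥ ((bU j : Fin n → ℝ)) ∈ Kr := fun j => ⟨(bU j : Fin n → ℝ), rfl⟩
  set N1 : Matrix (Fin r) (Fin r) ℝ :=
    Matrix.of (fun i j => bU.repr ⟨N *ᵥ (bU j : Fin n → ℝ), hmemN j⟩ i) with hN1def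
  have hNU : N * U = U * N1 := by
    ext i j
    have h1 : (N * U) i j = (N *ᵥ (bU j : Fin n → ℝ)) i := by
      simp [Matrix.mul_apply, Matrix.mulVec, dotProduct, hU, colsMatrix]
    have h2 : (U * N1) i j = (colsMatrix bU *ᵥ (fun l => N1 l j)) i := by
      simp [Matrix.mul_apply, Matrix.mulVec, dotProduct, hU]
    rw [h1, h2, colsMatrix_mulVec]
    have h3 : (∑ l, N1 l j • bU l : Kr) = ⟨N *ᵥ (bU j : Fin n → ℝ), hmemN j⟩ :=
      bU.sum_repr _
    rw [h3]
  have hNS : N * S = 0 := by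
    ext i j
    have h1 : (N * S) i j = (N *ᵥ (bS j : Fin n → ℝ)) i := by
      simp [Matrix.mul_apply, Matrix.mulVec, dotProduct, hS, colsMatrix]
    have h2 := (bS j).2
    rw [LinearMap.mem_ker] at h2
    rw [Matrix.mulVecLin_apply] at h2
    rw [h1, h2]
    rfl
  have hN1unit : IsUnit N1 := by
    rw [← Matrix.mulVec_injective_iff_isUnit]
    have hker : ∀ y : Fin r → ℝ, N1 *ᵥ y = 0 → y = 0 := by
      intro y hy
      have h1 : N *ᵥ (U *ᵥ y) = 0 := by
        rw [Matrix.mulVec_mulVec, hNU, ← Matrix.mulVec_mulVec, hy, Matrix.mulVec_zero]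
      have h2 : U *ᵥ y ∈ Kr := colsMatrix_mulVec_mem bU y
      obtain ⟨w, hw⟩ := h2
      have := hdisj (U *ᵥ y) w h1 hw
      exact colsMatrix_injective bU this
    have hinj : Function.Injective N1.mulVecLin := LinearMap.ker_eq_bot.mp (by
      rw [Submodule.eq_bot_iff]
      intro y hy
      rw [LinearMap.mem_ker] at hy
      exact hker y hy)
    intro y y' hyy'
    exact hinj hyy'
  have hN1det : IsUnit N1.det := (Matrix.isUnit_iff_isUnit_det N1).mp hN1unit
  set FB : Matrix (Fin r ⊕ Fin k) (Fin r ⊕ Fin k) ℝ := Matrix.fromBlocks N1 0 0 0 with hFBdef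
  have hPFB : Matrix.fromCols U S * FB = Matrix.fromCols (U * N1) 0 := by
    ext i j
    cases j with
    | inl j => simp [Matrix.mul_apply, Fintype.sum_sum_type, hFBdef, Matrix.fromCols]
    | inr j => simp [Matrix.mul_apply, Fintype.sum_sum_type, hFBdef, Matrix.fromCols]
  have hNP' : N * Matrix.fromCols U S = Matrix.fromCols U S * FB := by
    rw [Matrix.mul_fromCols, hNU, hNS, hPFB]
  set Bk := FB.submatrix ⇑e.symm ⇑e.symm with hBk
  have hNP : N * P = P * Bk := by
    have h1 : N * P = (N * Matrix.fromCols U S).submatrix id ⇑e.symm := by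
      conv_lhs => rw [← Matrix.submatrix_id_id N, hP]
      rw [show (id : Fin n → Fin n) = ⇑(Equiv.refl (Fin n)) from rfl]
      exact Matrix.submatrix_mul_equiv N (Matrix.fromCols U S) _ (Equiv.refl (Fin n)) _
    have h2 : P * Bk = (Matrix.fromCols U S * FB).submatrix id ⇑e.symm := by
      rw [hP, hBk]
      exact Matrix.submatrix_mul_equiv (Matrix.fromCols U S) FB _ e.symm _
    rw [h1, h2, hNP']
  have hNfact : N = P * Bk * P⁻¹ := by
    calc N = N * (P * P⁻¹) := by rw [Matrix.mul_nonsing_inv P hPdet, mul_one]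
    _ = (N * P) * P⁻¹ := by rw [mul_assoc]
    _ = P * Bk * P⁻¹ := by rw [hNP]
  -- polynomial part
  have hmapone : (1 : Matrix (Fin n) (Fin n) ℝ).map (C : ℝ →+* ℝ[X]) = 1 :=
    Matrix.map_one _ (_root_.map_zero C) (_root_.map_one C)
  have hsplit : (X : ℝ[X]) • N.map (C : ℝ →+* ℝ[X]) - 1
      = P.map (C : ℝ →+* ℝ[X]) * ((X : ℝ[X]) • Bk.map (C : ℝ →+* ℝ[X]) - 1)
        * (P⁻¹).map (C : ℝ →+* ℝ[X]) := by
    have hexp : P.map (C : ℝ →+* ℝ[X]) * ((X : ℝ[X]) • Bk.map (C : ℝ →+* ℝ[X]) - 1)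
        * (P⁻¹).map (C : ℝ →+* ℝ[X])
        = (X : ℝ[X]) • (P.map (C : ℝ →+* ℝ[X]) * Bk.map (C : ℝ →+* ℝ[X])
            * (P⁻¹).map (C : ℝ →+* ℝ[X]))
          - P.map (C : ℝ →+* ℝ[X]) * (P⁻¹).map (C : ℝ →+* ℝ[X]) := by
      rw [mul_sub, sub_mul, mul_one, mul_smul_comm, smul_mul_assoc]
    rw [hexp, ← Matrix.map_mul, ← Matrix.map_mul, ← Matrix.map_mul, ← hNfact,
      Matrix.mul_nonsing_inv P hPdet, hmapone]
  have hdetsplit : ((X : ℝ[X]) • N.map (C : ℝ →+* ℝ[X]) - 1).det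
      = ((X : ℝ[X]) • Bk.map (C : ℝ →+* ℝ[X]) - 1).det := by
    rw [hsplit, Matrix.det_mul, Matrix.det_mul]
    have hone : (P.map (C : ℝ →+* ℝ[X])).det * ((P⁻¹).map (C : ℝ →+* ℝ[X])).det = 1 := by
      rw [← Matrix.det_mul, ← Matrix.map_mul, Matrix.mul_nonsing_inv P hPdet, hmapone,
        Matrix.det_one]
    rw [mul_comm ((P.map (C : ℝ →+* ℝ[X])).det) _, mul_assoc, hone, mul_one]
  have hsubm : (X : ℝ[X]) • Bk.map (C : ℝ →+* ℝ[X]) - 1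
      = ((X : ℝ[X]) • FB.map (C : ℝ →+* ℝ[X]) - 1).submatrix ⇑e.symm ⇑e.symm := by
    rw [hBk, ← Matrix.submatrix_map]
    ext i j
    by_cases hij : i = j
    · subst hij
      simp [Matrix.submatrix_apply, Matrix.sub_apply, Matrix.smul_apply, Matrix.one_apply]
    · have hij' : e.symm i ≠ e.symm j := fun hc => hij (e.symm.injective hc)
      simp [Matrix.submatrix_apply, Matrix.sub_apply, Matrix.smul_apply,
        Matrix.one_apply_ne hij, Matrix.one_apply_ne hij']
  have hdetsub : ((X : ℝ[X]) • Bk.map (C : ℝ →+* ℝ[X]) - 1).det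
      = ((X : ℝ[X]) • FB.map (C : ℝ →+* ℝ[X]) - 1).det := by
    rw [hsubm, Matrix.det_submatrix_equiv_self]
  have hFBblocks : (X : ℝ[X]) • FB.map (C : ℝ →+* ℝ[X]) - 1
      = Matrix.fromBlocks ((X : ℝ[X]) • N1.map (C : ℝ →+* ℝ[X]) - 1) 0 0
          (-(1 : Matrix (Fin k) (Fin k) ℝ[X])) := by
    rw [hFBdef]
    ext i j
    cases i with
    | inl i => cases j with
      | inl j =>
        rw [Matrix.sub_apply, Matrix.smul_apply, Matrix.map_apply, Matrix.fromBlocks_apply₁₁,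
          Matrix.fromBlocks_apply₁₁, Matrix.sub_apply, Matrix.smul_apply, Matrix.map_apply]
        by_cases hij : i = j
        · subst hij; simp [Matrix.one_apply]
        · rw [Matrix.one_apply_ne hij,
            Matrix.one_apply_ne (show (Sum.inl i : Fin r ⊕ Fin k) ≠ Sum.inl j by simp [hij])]
      | inr j =>
        rw [Matrix.sub_apply, Matrix.smul_apply, Matrix.map_apply, Matrix.fromBlocks_apply₁₂,
          Matrix.fromBlocks_apply₁₂,
          Matrix.one_apply_ne (show (Sum.inl i : Fin r ⊕ Fin k) ≠ Sum.inr j by simp)]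
        simp
    | inr i => cases j with
      | inl j =>
        rw [Matrix.sub_apply, Matrix.smul_apply, Matrix.map_apply, Matrix.fromBlocks_apply₂₁,
          Matrix.fromBlocks_apply₂₁,
          Matrix.one_apply_ne (show (Sum.inr i : Fin r ⊕ Fin k) ≠ Sum.inl j by simp)]
        simp
      | inr j =>
        rw [Matrix.sub_apply, Matrix.smul_apply, Matrix.map_apply, Matrix.fromBlocks_apply₂₂,
          Matrix.fromBlocks_apply₂₂, Matrix.neg_apply]
        by_cases hij : i = j
        · subst hij; simp [Matrix.one_apply]
        · rw [Matrix.one_apply_ne hij,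
            Matrix.one_apply_ne (show (Sum.inr i : Fin r ⊕ Fin k) ≠ Sum.inr j by simp [hij])]
          simp
  have hdetFB : ((X : ℝ[X]) • FB.map (C : ℝ →+* ℝ[X]) - 1).det
      = ((X : ℝ[X]) • N1.map (C : ℝ →+* ℝ[X]) - 1).det * (-1 : ℝ[X]) ^ k := by
    rw [hFBblocks, Matrix.det_fromBlocks_zero₂₁]
    congr 1
    rw [show (-(1 : Matrix (Fin k) (Fin k) ℝ[X])).det
        = (-1 : ℝ[X]) ^ Fintype.card (Fin k) * (1 : Matrix (Fin k) (Fin k) ℝ[X]).det from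
          Matrix.det_neg 1]
    rw [Matrix.det_one, mul_one, Fintype.card_fin]
  have hmapone' : (1 : Matrix (Fin r) (Fin r) ℝ).map (C : ℝ →+* ℝ[X]) = 1 :=
    Matrix.map_one _ (_root_.map_zero C) (_root_.map_one C)
  have hchar : (X : ℝ[X]) • N1.map (C : ℝ →+* ℝ[X]) - 1
      = N1.map (C : ℝ →+* ℝ[X]) * (N1⁻¹).charmatrix := by
    rw [Matrix.charmatrix, mul_sub]
    congr 1
    · ext i j
      rw [Matrix.scalar_apply, Matrix.mul_diagonal, Matrix.smul_apply, smul_eq_mul, mul_comm]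
    · rw [RingHom.mapMatrix_apply, ← Matrix.map_mul, Matrix.mul_nonsing_inv N1 hN1det, hmapone']
  have hdetchar : ((X : ℝ[X]) • N1.map (C : ℝ →+* ℝ[X]) - 1).det
      = C N1.det * (N1⁻¹).charpoly := by
    rw [hchar, Matrix.det_mul, Matrix.charpoly]
    congr 1
    rw [RingHom.map_det, RingHom.mapMatrix_apply]
  rw [hdetsplit, hdetsub, hdetFB, hdetchar, hrank]
  have hCpow : (-1 : ℝ[X]) ^ k = C ((-1 : ℝ) ^ k) := by
    rw [map_pow, map_neg, _root_.map_one]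
  rw [hCpow, mul_comm (C N1.det * (N1⁻¹).charpoly) _, ← mul_assoc, ← _root_.map_mul]
  rw [Polynomial.natDegree_C_mul (mul_ne_zero (pow_ne_zero _ (by norm_num)) hN1det.ne_zero)]
  rw [Matrix.charpoly_natDegree_eq_dim, Fintype.card_fin]


end Helpers

open Polynomial
open scoped ComplexOrder

/-- Theorem `thm:solutionsOfNonsymmetricGAREs` (iii): if `Q` is
invertible, then `Q⁻ᵀ` is a stabilizing solution of the modified filter GARE. -/
theorem Q_inv_transpose_is_stabilizing_filter_solution
    {n m : ℕ} (E J R Q : Matrix (Fin n) (Fin n) ℝ) (B : Matrix (Fin n) (Fin m) ℝ)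
    (A C_ : _) (hA : A = (J - R) * Q) (hC : C_ = Bᵀ * Q)
    (hJ : Jᵀ = -J) (hR : R.PosSemidef) (hEQ : (Eᵀ * Q).PosSemidef)
    (hreg : PencilRegular E A)
    (hstab : StronglyStabilizable E A B)
    (hdet : StronglyDetectable E A C_)
    (hQ : IsUnit Q) :
    (A * Q⁻¹ + (Q⁻¹)ᵀ * Aᵀ - (Q⁻¹)ᵀ * C_ᵀ * C_ * Q⁻¹ + B * Bᵀ + (2 : ℝ) • R = 0 ∧
        E * Q⁻¹ = (Q⁻¹)ᵀ * Eᵀ) ∧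
      PencilStable E (A - (Q⁻¹)ᵀ * C_ᵀ * C_) := by

  classical
  have hQdet : IsUnit Q.det := (Matrix.isUnit_iff_isUnit_det Q).mp hQ
  have hQQi : Q * Q⁻¹ = 1 := Matrix.mul_nonsing_inv Q hQdet
  have hQt : (Q⁻¹)ᵀ * Qᵀ = 1 := by rw [← Matrix.transpose_mul, hQQi, Matrix.transpose_one]
  have hRsymm : Rᵀ = R := by
    have h := hR.1.eq
    rwa [Matrix.conjTranspose_eq_transpose_of_trivial] at h
  have hsymEQ : (Eᵀ * Q)ᵀ = Eᵀ * Q := by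
    have h := hEQ.1.eq
    rwa [Matrix.conjTranspose_eq_transpose_of_trivial] at h
  have hQE : Qᵀ * E = Eᵀ * Q := by
    calc Qᵀ * E = (Eᵀ * Q)ᵀ := by rw [Matrix.transpose_mul, Matrix.transpose_transpose]
    _ = Eᵀ * Q := hsymEQ
  have hAQi : A * Q⁻¹ = J - R := by rw [hA, Matrix.mul_assoc, hQQi, Matrix.mul_one]
  have hCt : C_ᵀ = Qᵀ * B := by rw [hC, Matrix.transpose_mul, Matrix.transpose_transpose]
  have hCQi : C_ * Q⁻¹ = Bᵀ := by rw [hC, Matrix.mul_assoc, hQQi, Matrix.mul_one]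
  have hQiCt : (Q⁻¹)ᵀ * C_ᵀ = B := by rw [hCt, ← Matrix.mul_assoc, hQt, Matrix.one_mul]
  have hgare1 : A * Q⁻¹ + (Q⁻¹)ᵀ * Aᵀ - (Q⁻¹)ᵀ * C_ᵀ * C_ * Q⁻¹ + B * Bᵀ + (2 : ℝ) • R = 0 := by
    have h2 : (Q⁻¹)ᵀ * Aᵀ = -J - R := by
      rw [show (Q⁻¹)ᵀ * Aᵀ = (A * Q⁻¹)ᵀ from (Matrix.transpose_mul A Q⁻¹).symm, hAQi,
        Matrix.transpose_sub, hJ, hRsymm]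
    have h3 : (Q⁻¹)ᵀ * C_ᵀ * C_ * Q⁻¹ = B * Bᵀ := by
      rw [Matrix.mul_assoc, hCQi, hQiCt]
    rw [hAQi, h2, h3, two_smul]
    abel
  have hgare2 : E * Q⁻¹ = (Q⁻¹)ᵀ * Eᵀ := by
    have h1 : E = (Q⁻¹)ᵀ * (Qᵀ * E) := by rw [← Matrix.mul_assoc, hQt, Matrix.one_mul]
    calc E * Q⁻¹ = ((Q⁻¹)ᵀ * (Qᵀ * E)) * Q⁻¹ := by rw [← h1]
    _ = (Q⁻¹)ᵀ * Eᵀ * (Q * Q⁻¹) := by rw [hQE]; simp only [Matrix.mul_assoc]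
    _ = (Q⁻¹)ᵀ * Eᵀ := by rw [hQQi, Matrix.mul_one]
  refine ⟨⟨hgare1, hgare2⟩, ?_⟩
  -- the closed-loop matrix
  set R2 : Matrix (Fin n) (Fin n) ℝ := R + B * Bᵀ with hR2
  have hBBt : (B * Bᵀ).PosSemidef := by
    have h := Matrix.posSemidef_self_mul_conjTranspose B
    rwa [Matrix.conjTranspose_eq_transpose_of_trivial] at h
  have hR2psd : R2.PosSemidef := hR.add hBBt
  set Acl : Matrix (Fin n) (Fin n) ℝ := (J - R2) * Q with hAcl
  have hAclEq : A - (Q⁻¹)ᵀ * C_ᵀ * C_ = Acl := by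
    rw [hAcl, hA, hQiCt, hC, hR2, ← Matrix.mul_assoc]
    noncomm_ring
  have hAdecomp : A = Acl + B * (Bᵀ * Q) := by
    rw [hAcl, hA, hR2, ← Matrix.mul_assoc]
    noncomm_ring
  rw [hAclEq]
  have hQtE : (Qᵀ * E).PosSemidef := by rw [hQE]; exact hEQ
  -- kernel form of strong detectability (finite eigenvalue part)
  have hker : ∀ lam : ℂ, 0 ≤ lam.re → ∀ v : Fin n → ℂ,
      (lam • E.toC - A.toC) *ᵥ v = 0 → C_.toC *ᵥ v = 0 → v = 0 := by
    intro lam hlam v hv1 hv2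
    have hrk := hdet.2 lam hlam
    set W := Matrix.fromCols (lam • Eᵀ.toC - Aᵀ.toC) (C_ᵀ).toC with hW
    have hWt : Wᵀ = Matrix.fromRows (lam • E.toC - A.toC) C_.toC := by
      rw [hW, Matrix.transpose_fromCols, Matrix.transpose_sub, Matrix.transpose_smul,
        Matrix.toC_transpose, Matrix.toC_transpose, Matrix.toC_transpose,
        Matrix.transpose_transpose, Matrix.transpose_transpose, Matrix.transpose_transpose]
    have hrkW : (Wᵀ).rank = n := by
      rw [Matrix.rank_transpose, hrk, Fintype.card_fin]
    refine eq_zero_of_rank_eq Wᵀ hrkW ?_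
    rw [hWt, Matrix.fromRows_mulVec, hv1, hv2]
    funext i
    cases i <;> simp
  -- kernel form of strong detectability (impulse part)
  have hker0 : ∀ u w : Fin n → ℝ, E *ᵥ u = 0 → A *ᵥ u = E *ᵥ w → C_ *ᵥ u = 0 → u = 0 := by
    intro u w hEu hAu hCu
    set KE := LinearMap.ker (Eᵀ).mulVecLin with hKE
    have hcard : Module.finrank ℝ KE = Fintype.card (Fin n) - (Eᵀ).rank := by
      have h1 := LinearMap.finrank_range_add_finrank_ker (Eᵀ).mulVecLin
      rw [Module.finrank_pi, Fintype.card_fin] at h1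
      rw [Fintype.card_fin,
        show (Eᵀ).rank = Module.finrank ℝ (LinearMap.range (Eᵀ).mulVecLin) from rfl]
      exact Nat.eq_sub_of_add_eq' h1
    let bK : Module.Basis (Fin (Fintype.card (Fin n) - (Eᵀ).rank)) ℝ KE :=
      (Module.finBasis ℝ KE).reindex (finCongr hcard)
    set S₀ := colsMatrix bK with hS₀
    have hrange : LinearMap.range S₀.mulVecLin = LinearMap.ker (Eᵀ).mulVecLin := by
      apply le_antisymm
      · rintro z ⟨y, rfl⟩
        exact colsMatrix_mulVec_mem bK y
      · intro z hz
        obtain ⟨y, hy⟩ := colsMatrix_surj bK hz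
        exact ⟨y, hy⟩
    have hrk := hdet.1 S₀ hrange
    set W := Matrix.fromCols (Matrix.fromCols Eᵀ (Aᵀ * S₀)) C_ᵀ with hW
    have hWt : Wᵀ = Matrix.fromRows (Matrix.fromRows E (S₀ᵀ * A)) C_ := by
      rw [hW, Matrix.transpose_fromCols, Matrix.transpose_fromCols, Matrix.transpose_mul,
        Matrix.transpose_transpose, Matrix.transpose_transpose, Matrix.transpose_transpose]
    have hS0A : (S₀ᵀ * A) *ᵥ u = 0 := by
      rw [← Matrix.mulVec_mulVec, hAu]
      funext j
      have hcol : Eᵀ *ᵥ (fun i => S₀ i j) = 0 := by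
        have hmem := (bK j).2
        rw [LinearMap.mem_ker] at hmem
        have hcoleq : (fun i => S₀ i j) = ((bK j : Fin n → ℝ)) := by
          funext i; rfl
        rw [hcoleq]
        exact hmem
      have hstep : (S₀ᵀ *ᵥ (E *ᵥ w)) j = (fun i => S₀ i j) ⬝ᵥ (E *ᵥ w) := rfl
      rw [hstep, Matrix.dotProduct_mulVec,
        show (fun i => S₀ i j) ᵥ* E = Eᵀ *ᵥ (fun i => S₀ i j) from by
          rw [← Matrix.transpose_transpose E, Matrix.vecMul_transpose,
            Matrix.transpose_transpose],
        hcol, zero_dotProduct]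
      rfl
    have hrkW : (Wᵀ).rank = n := by
      rw [Matrix.rank_transpose, hrk, Fintype.card_fin]
    refine eq_zero_of_rank_eq Wᵀ hrkW ?_
    rw [hWt, Matrix.fromRows_mulVec, Matrix.fromRows_mulVec, hEu, hS0A, hCu]
    funext i
    rcases i with (i | i) | i <;> simp
  -- eigenvalue exclusion for the closed loop
  have hnodet : ∀ lam : ℂ, 0 ≤ lam.re → (lam • E.toC - Acl.toC).det ≠ 0 := by
    intro lam hlam hdet0
    obtain ⟨v, hv0, hv⟩ := Matrix.exists_mulVec_eq_zero_iff.mpr hdet0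
    set x := Q.toC *ᵥ v with hx
    clear_value x
    have heq : lam • (E.toC *ᵥ v) = J.toC *ᵥ x - R2.toC *ᵥ x := by
      rw [Matrix.sub_mulVec] at hv
      have h1 : (lam • E.toC) *ᵥ v = Acl.toC *ᵥ v := sub_eq_zero.mp hv
      rw [Matrix.smul_mulVec] at h1
      rw [h1, hAcl, Matrix.toC_mul, Matrix.toC_sub, ← Matrix.mulVec_mulVec, ← hx,
        Matrix.sub_mulVec]
    have hdot := congrArg (fun z => dotProduct (star x) z) heq
    simp only [dotProduct_sub, dotProduct_smul, smul_eq_mul] at hdot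
    have hstarx : star x = star v ᵥ* (Qᵀ).toC := by
      rw [hx, Matrix.star_mulVec, ← Matrix.toC_conjTranspose]
    have ha' : star x ⬝ᵥ (E.toC *ᵥ v) = star v ⬝ᵥ ((Qᵀ * E).toC *ᵥ v) := by
      rw [hstarx, Matrix.toC_mul, Matrix.dotProduct_mulVec, Matrix.vecMul_vecMul,
        ← Matrix.dotProduct_mulVec]
    have haC : (0 : ℂ) ≤ star x ⬝ᵥ (E.toC *ᵥ v) := by
      rw [ha']
      exact (hQtE.toCPSD).dotProduct_mulVec_nonneg v
    have hrrC : (0 : ℂ) ≤ star x ⬝ᵥ (R2.toC *ᵥ x) := (hR2psd.toCPSD).dotProduct_mulVec_nonneg x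
    -- skew part has zero real part
    have hzre : (star x ⬝ᵥ (J.toC *ᵥ x)).re = 0 := by
      have hsz : star (star x ⬝ᵥ (J.toC *ᵥ x)) = -(star x ⬝ᵥ (J.toC *ᵥ x)) := by
        calc star (star x ⬝ᵥ (J.toC *ᵥ x))
            = star (star (star (J.toC *ᵥ x) ⬝ᵥ x)) := by rw [Matrix.star_dotProduct]
        _ = star (J.toC *ᵥ x) ⬝ᵥ x := star_star _
        _ = (star x ᵥ* (J.toC)ᴴ) ⬝ᵥ x := by rw [Matrix.star_mulVec]
        _ = star x ⬝ᵥ ((J.toC)ᴴ *ᵥ x) := (Matrix.dotProduct_mulVec (star x) ((J.toC)ᴴ) x).symm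
        _ = -(star x ⬝ᵥ (J.toC *ᵥ x)) := by
            rw [← Matrix.toC_conjTranspose, hJ, Matrix.toC_neg, Matrix.neg_mulVec,
              dotProduct_neg]
      have := congrArg Complex.re hsz
      simp only [Complex.star_def, Complex.conj_re, Complex.neg_re] at this
      linarith
    -- real parts
    have haim : (star x ⬝ᵥ (E.toC *ᵥ v)).im = 0 := by
      have := (Complex.le_def.mp haC).2
      simpa using this.symm
    have hare : 0 ≤ (star x ⬝ᵥ (E.toC *ᵥ v)).re := by
      have := (Complex.le_def.mp haC).1
      simpa using this
    have hrrim : (star x ⬝ᵥ (R2.toC *ᵥ x)).im = 0 := by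
      have := (Complex.le_def.mp hrrC).2
      simpa using this.symm
    have hrrre : 0 ≤ (star x ⬝ᵥ (R2.toC *ᵥ x)).re := by
      have := (Complex.le_def.mp hrrC).1
      simpa using this
    have hre := congrArg Complex.re hdot
    rw [Complex.mul_re, haim, Complex.sub_re, hzre] at hre
    simp only [mul_zero, sub_zero, zero_sub] at hre
    -- lam.re * a.re = -rr.re with all nonneg forces rr = 0
    have hrr0 : star x ⬝ᵥ (R2.toC *ᵥ x) = 0 := by
      have h1 : lam.re * (star x ⬝ᵥ (E.toC *ᵥ v)).re ≥ 0 := mul_nonneg hlam hare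
      have h2 : (star x ⬝ᵥ (R2.toC *ᵥ x)).re = 0 := by linarith
      exact Complex.ext h2 hrrim
    have hR2x : R2.toC *ᵥ x = 0 := ((hR2psd.toCPSD).dotProduct_mulVec_zero_iff x).mp hrr0
    -- split
    have hsum : star x ⬝ᵥ (R.toC *ᵥ x) + star x ⬝ᵥ ((B * Bᵀ).toC *ᵥ x) = 0 := by
      rw [← dotProduct_add, ← Matrix.add_mulVec, ← Matrix.toC_add, ← hR2, hR2x,
        dotProduct_zero]
    have hp : (0 : ℂ) ≤ star x ⬝ᵥ (R.toC *ᵥ x) := (hR.toCPSD).dotProduct_mulVec_nonneg x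
    have hq : (0 : ℂ) ≤ star x ⬝ᵥ ((B * Bᵀ).toC *ᵥ x) := (hBBt.toCPSD).dotProduct_mulVec_nonneg x
    have hq0 : star x ⬝ᵥ ((B * Bᵀ).toC *ᵥ x) = 0 := by
      have h1 : star x ⬝ᵥ ((B * Bᵀ).toC *ᵥ x) ≤ 0 := by
        calc star x ⬝ᵥ ((B * Bᵀ).toC *ᵥ x)
            ≤ star x ⬝ᵥ (R.toC *ᵥ x) + star x ⬝ᵥ ((B * Bᵀ).toC *ᵥ x) :=
              le_add_of_nonneg_left hp
        _ = 0 := hsum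
      exact le_antisymm h1 hq
    -- Bᵀ x = 0
    have hy0 : Bᵀ.toC *ᵥ x = 0 := by
      have h1 : star x ⬝ᵥ ((B * Bᵀ).toC *ᵥ x)
          = star (Bᵀ.toC *ᵥ x) ⬝ᵥ (Bᵀ.toC *ᵥ x) := by
        have e1 : (B * Bᵀ).toC *ᵥ x = B.toC *ᵥ (Bᵀ.toC *ᵥ x) := by
          rw [Matrix.toC_mul, Matrix.mulVec_mulVec]
        have e2 : star (Bᵀ.toC *ᵥ x) = star x ᵥ* B.toC := by
          rw [Matrix.star_mulVec, ← Matrix.toC_conjTranspose, Matrix.transpose_transpose]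
        rw [e1, e2]
        exact Matrix.dotProduct_mulVec (star x) (B.toC) (Bᵀ.toC *ᵥ x)
      rw [h1] at hq0
      exact dotProduct_star_self_eq_zero.mp hq0
    -- conclude with detectability
    have hCv : C_.toC *ᵥ v = 0 := by
      rw [hC, Matrix.toC_mul, ← Matrix.mulVec_mulVec, ← hx, hy0]
    have hAv : (lam • E.toC - A.toC) *ᵥ v = 0 := by
      have hBBQv : (B * (Bᵀ * Q)).toC *ᵥ v = 0 := by
        rw [Matrix.toC_mul, Matrix.toC_mul, ← Matrix.mulVec_mulVec, ← Matrix.mulVec_mulVec,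
          ← hx, hy0, Matrix.mulVec_zero]
      have hAtoC : A.toC = Acl.toC + (B * (Bᵀ * Q)).toC := by
        rw [← Matrix.toC_add, ← hAdecomp]
      rw [Matrix.sub_mulVec, hAtoC, Matrix.add_mulVec, hBBQv, add_zero, ← Matrix.sub_mulVec]
      exact hv
    exact hv0 (hker lam hlam v hAv hCv)
  -- invertibility of Acl
  have hAclC : (Acl.toC).det ≠ 0 := by
    have h0 := hnodet 0 le_rfl
    rw [zero_smul, zero_sub] at h0
    intro hc
    apply h0
    rw [Matrix.det_neg, hc, mul_zero]
  have hAcldet : IsUnit Acl.det := by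
    rw [isUnit_iff_ne_zero]
    intro hc
    apply hAclC
    rw [Matrix.det_toC, hc, Complex.ofReal_zero]
  -- impulse-freeness
  set N := Acl⁻¹ * E with hN
  have hAclN : Acl * N = E := by
    rw [hN, ← Matrix.mul_assoc, Matrix.mul_nonsing_inv _ hAcldet, Matrix.one_mul]
  have hdisj : ∀ u w : Fin n → ℝ, N *ᵥ u = 0 → N *ᵥ w = u → u = 0 := by
    intro u w h1 h2
    have hEu : E *ᵥ u = 0 := by
      rw [← hAclN, ← Matrix.mulVec_mulVec, h1, Matrix.mulVec_zero]
    have hAu : Acl *ᵥ u = E *ᵥ w := by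
      rw [← h2, Matrix.mulVec_mulVec, hAclN]
    set xx := Q *ᵥ u with hxx
    clear_value xx
    have heq2 : J *ᵥ xx - R2 *ᵥ xx = E *ᵥ w := by
      rw [← hAu, hAcl, ← Matrix.mulVec_mulVec, ← hxx, Matrix.sub_mulVec]
    have hd := congrArg (fun z => dotProduct xx z) heq2
    simp only [dotProduct_sub] at hd
    have hJ0 : xx ⬝ᵥ (J *ᵥ xx) = 0 := by
      have h3 : xx ⬝ᵥ (J *ᵥ xx) = -(xx ⬝ᵥ (J *ᵥ xx)) := by
        calc xx ⬝ᵥ (J *ᵥ xx) = (xx ᵥ* J) ⬝ᵥ xx := Matrix.dotProduct_mulVec _ _ _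
        _ = (Jᵀ *ᵥ xx) ⬝ᵥ xx := by
            rw [show xx ᵥ* J = Jᵀ *ᵥ xx from by
              rw [← Matrix.transpose_transpose J, Matrix.vecMul_transpose,
                Matrix.transpose_transpose]]
        _ = ((-J) *ᵥ xx) ⬝ᵥ xx := by rw [hJ]
        _ = -((J *ᵥ xx) ⬝ᵥ xx) := by rw [Matrix.neg_mulVec, neg_dotProduct]
        _ = -(xx ⬝ᵥ (J *ᵥ xx)) := by rw [dotProduct_comm]
      linarith
    have hHu : (Qᵀ * E) *ᵥ u = 0 := by
      rw [← Matrix.mulVec_mulVec, hEu, Matrix.mulVec_zero]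
    have hEw0 : xx ⬝ᵥ (E *ᵥ w) = 0 := by
      have hstep : xx ⬝ᵥ (E *ᵥ w) = ((Qᵀ * E) *ᵥ w) ⬝ᵥ u := by
        rw [hxx, dotProduct_comm, Matrix.dotProduct_mulVec,
          show (E *ᵥ w) ᵥ* Q = Qᵀ *ᵥ (E *ᵥ w) from by
            rw [← Matrix.transpose_transpose Q, Matrix.vecMul_transpose,
              Matrix.transpose_transpose],
          Matrix.mulVec_mulVec]
      rw [hstep, dotProduct_comm, Matrix.dotProduct_mulVec,
        show u ᵥ* (Qᵀ * E) = (Qᵀ * E)ᵀ *ᵥ u from by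
          rw [← Matrix.transpose_transpose (Qᵀ * E), Matrix.vecMul_transpose,
            Matrix.transpose_transpose],
        show (Qᵀ * E)ᵀ = Qᵀ * E from by
          rw [Matrix.transpose_mul, Matrix.transpose_transpose, hQE],
        hHu, zero_dotProduct]
    have hR2xx : xx ⬝ᵥ (R2 *ᵥ xx) = 0 := by
      rw [hJ0, hEw0] at hd
      linarith
    have hRnn : 0 ≤ xx ⬝ᵥ (R *ᵥ xx) := by
      have := hR.dotProduct_mulVec_nonneg xx
      simpa using this
    have hBnn : 0 ≤ xx ⬝ᵥ ((B * Bᵀ) *ᵥ xx) := by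
      have := hBBt.dotProduct_mulVec_nonneg xx
      simpa using this
    have hsum : xx ⬝ᵥ (R *ᵥ xx) + xx ⬝ᵥ ((B * Bᵀ) *ᵥ xx) = 0 := by
      rw [← dotProduct_add, ← Matrix.add_mulVec, ← hR2, hR2xx]
    have hBB0 : xx ⬝ᵥ ((B * Bᵀ) *ᵥ xx) = 0 := by linarith
    have hBtx : Bᵀ *ᵥ xx = 0 := by
      have h4 : xx ⬝ᵥ ((B * Bᵀ) *ᵥ xx) = (Bᵀ *ᵥ xx) ⬝ᵥ (Bᵀ *ᵥ xx) := by
        rw [← Matrix.mulVec_mulVec, Matrix.dotProduct_mulVec,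
          show xx ᵥ* B = Bᵀ *ᵥ xx from by
            rw [← Matrix.transpose_transpose B, Matrix.vecMul_transpose,
              Matrix.transpose_transpose]]
      rw [h4] at hBB0
      exact dotProduct_self_eq_zero.mp hBB0
    have hCu : C_ *ᵥ u = 0 := by
      rw [hC, ← Matrix.mulVec_mulVec, ← hxx, hBtx]
    have hAu' : A *ᵥ u = E *ᵥ w := by
      rw [hAdecomp, Matrix.add_mulVec, hAu,
        show (B * (Bᵀ * Q)) *ᵥ u = 0 from by
          rw [← Matrix.mulVec_mulVec, ← Matrix.mulVec_mulVec, ← hxx, hBtx,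
            Matrix.mulVec_zero],
        add_zero]
    exact hker0 u w hEu hAu' hCu
  have hdeg := natDegree_det_X_smul_sub_one N hdisj
  have hrankN : N.rank = E.rank := by
    have h5 := Matrix.rank_mul_eq_right_of_isUnit_det Acl N hAcldet
    rw [hAclN] at h5
    exact h5.symm
  have himp : PencilImpulseFree E Acl := by
    show (pencilPoly E Acl).natDegree = E.rank
    have hfact : (X : ℝ[X]) • E.map (Polynomial.C : ℝ → Polynomial ℝ)
        - Acl.map (Polynomial.C : ℝ → Polynomial ℝ)
        = Acl.map (Polynomial.C : ℝ →+* ℝ[X]) * ((X : ℝ[X]) • N.map (Polynomial.C : ℝ →+* ℝ[X]) - 1) := by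
      rw [mul_sub, mul_one, mul_smul_comm, ← Matrix.map_mul, hAclN]
    rw [pencilPoly, hfact, Matrix.det_mul]
    rw [show (Acl.map (Polynomial.C : ℝ →+* ℝ[X])).det = Polynomial.C Acl.det from by
      rw [RingHom.map_det, RingHom.mapMatrix_apply]]
    rw [Polynomial.natDegree_C_mul hAcldet.ne_zero, hdeg, hrankN]
  refine ⟨⟨0, hnodet 0 le_rfl⟩, himp, ?_⟩
  intro lam hlam
  by_contra hc
  push_neg at hc
  exact hnodet lam hc hlam
end
end

section
/- Let n, r, ℓ be given with 1 ≤ ℓ ≤ r ≤ n. Let Ẽ = [[I_r, 0],[0, 0]] ∈ ℝ^{n×n}, let J̃ ∈ ℝ^{n×n} be skew-symmetric, R̃ ∈ ℝ^{n×n} symmetric positive semidefinite, B̃ ∈ ℝ^{n×m}, and let Q̃ ∈ ℝ^{n×n} be invertible with ẼᵀQ̃ = Q̃ᵀẼ positive semidefinite and, in the block partition with diagonal block sizes ℓ, r−ℓ, n−r, Q̃ = [[Q̃₁₁, 0, 0],[0, Q̃₂₂, 0],[Q̃₃₁, Q̃₃₂, Q̃₃₃]]. Set Ã := (J̃−R̃)Q̃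 and C̃ := B̃ᵀQ̃, and let K_ℓ = [[I_ℓ, 0, 0],[0, 0, I_{n−r}]] ∈ ℝ^{(ℓ+n−r)×n}. Then the reduced-order model (E_r, A_r, B_r, C_r) := (K_ℓẼK_ℓᵀ, K_ℓÃK_ℓᵀ, K_ℓB̃, C̃K_ℓᵀ) is port-Hamiltonian: with J_r := K_ℓJ̃K_ℓᵀ, R_r := K_ℓR̃K_ℓᵀ, and Q_r := [[Q̃₁₁, 0],[Q̃₃₁, Q̃₃₃]], one has J_rᵀ = −J_r, R_r = R_rᵀ positive semidefinite, A_r = (J_r − R_r)Q_r, C_r = B_rᵀQ_r, and E_rᵀQ_r = Q_rᵀE_r positive semidefinite. -/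
open Matrix

noncomputable section

/-- Theorem `thm:rom_is_ph`: truncation of a balanced semi-explicit
port-Hamiltonian realization (with the indicated block structure of `Q̃`) yields again a
port-Hamiltonian reduced-order model.  Block sizes: `l = ℓ`, `p = r - ℓ`, `q = n - r`. -/
theorem truncated_system_is_port_Hamiltonian
    {l p q m : ℕ} (hl : 1 ≤ l)
    (Jt Rt : Matrix (Fin l ⊕ (Fin p ⊕ Fin q)) (Fin l ⊕ (Fin p ⊕ Fin q)) ℝ)
    (Bt : Matrix (Fin l ⊕ (Fin p ⊕ Fin q)) (Fin m) ℝ)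
    (Q11 : Matrix (Fin l) (Fin l) ℝ) (Q22 : Matrix (Fin p) (Fin p) ℝ)
    (Q31 : Matrix (Fin q) (Fin l) ℝ) (Q32 : Matrix (Fin q) (Fin p) ℝ)
    (Q33 : Matrix (Fin q) (Fin q) ℝ)
    (Et Qt At Ct : _)
    -- Ẽ = [[I_r, 0],[0, 0]] with r = l + p
    (hEt : Et = Matrix.fromBlocks (1 : Matrix (Fin l) (Fin l) ℝ) 0 0
      (Matrix.fromBlocks (1 : Matrix (Fin p) (Fin p) ℝ) 0 0 (0 : Matrix (Fin q) (Fin q) ℝ)))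
    -- Q̃ = [[Q̃₁₁, 0, 0],[0, Q̃₂₂, 0],[Q̃₃₁, Q̃₃₂, Q̃₃₃]]
    (hQt : Qt = Matrix.fromBlocks Q11 0 (Matrix.fromRows 0 Q31)
      (Matrix.fromBlocks Q22 0 Q32 Q33))
    (hAt : At = (Jt - Rt) * Qt) (hCt : Ct = Btᵀ * Qt)
    (hJ : Jtᵀ = -Jt) (hR : Rt.PosSemidef)
    (hQinv : IsUnit Qt) (hEQ : (Etᵀ * Qt).PosSemidef)
    -- the truncation matrix K_ℓ
    (K : Matrix (Fin l ⊕ Fin q) (Fin l ⊕ (Fin p ⊕ Fin q)) ℝ)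
    (hK : K = Matrix.fromBlocks (1 : Matrix (Fin l) (Fin l) ℝ) 0 0
      (Matrix.fromCols (0 : Matrix (Fin q) (Fin p) ℝ) (1 : Matrix (Fin q) (Fin q) ℝ)))
    (Er Ar Br Cr Jr Rr Qr : _)
    (hEr : Er = K * Et * Kᵀ) (hAr : Ar = K * At * Kᵀ)
    (hBr : Br = K * Bt) (hCr : Cr = Ct * Kᵀ)
    (hJr : Jr = K * Jt * Kᵀ) (hRr : Rr = K * Rt * Kᵀ)
    (hQr : Qr = Matrix.fromBlocks Q11 0 Q31 Q33) :
    Jrᵀ = -Jr ∧ Rr.PosSemidef ∧ Ar = (Jr - Rr) * Qr ∧ Cr = Brᵀ * Qr ∧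
      (Erᵀ * Qr).PosSemidef := by
  have hQK : Qt * Kᵀ = Kᵀ * Qr := by
    subst hQt hK hQr
    ext (i | (i | i)) (j | j) <;>
      simp [Matrix.mul_apply, Fintype.sum_sum_type, Matrix.fromBlocks,
        Matrix.fromRows_apply_inl, Matrix.fromRows_apply_inr, Matrix.fromCols, Matrix.one_apply, Finset.mul_sum]
  have hKT : Kᴴ = Kᵀ := by
    ext i j; simp [Matrix.conjTranspose_apply, Matrix.transpose_apply]
  refine ⟨?_, ?_, ?_, ?_, ?_⟩
  · rw [hJr]
    simp [Matrix.transpose_mul, hJ, Matrix.mul_assoc, Matrix.neg_mul, Matrix.mul_neg]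
  · rw [hRr]
    have := hR.mul_mul_conjTranspose_same K
    rwa [hKT] at this
  · have h : Ar = K * (Jt - Rt) * (Qt * Kᵀ) := by rw [hAr, hAt]; simp [Matrix.mul_assoc]
    rw [h, hQK, hJr, hRr]
    simp [Matrix.mul_sub, Matrix.sub_mul, Matrix.mul_assoc]
  · rw [hCr, hCt, hBr, Matrix.transpose_mul, Matrix.mul_assoc, hQK, ← Matrix.mul_assoc]
  · have h : Erᵀ * Qr = K * (Etᵀ * Qt) * Kᵀ := by
      rw [hEr]
      simp only [Matrix.transpose_mul, Matrix.transpose_transpose]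
      rw [Matrix.mul_assoc K, Matrix.mul_assoc Etᵀ, ← hQK]
      simp [Matrix.mul_assoc]
    rw [h]
    have := hEQ.mul_mul_conjTranspose_same K
    rwa [hKT] at this
end
end

section
/- Consider a port-Hamiltonian descriptor system given by E, J, R, Q ∈ ℝ^{n×n} and B ∈ ℝ^{n×m} with Jᵀ = −J, R = Rᵀ ⪰ 0, EᵀQ = QᵀE ⪰ 0, A := (J−R)Q, C := BᵀQ, such that (E,A) is regular, (E,A,B) is strongly stabilizable, and (E,A,C) is strongly detectable. Let 𝒫c and 𝒫f be stabilizing solutions of the control GARE and modified filter GARE such that I_n + 𝒫f𝒫cᵀ is invertible, and set A_Pc := A − BBᵀ𝒫c and ℒ := (I_n + 𝒫f𝒫cᵀ)⁻¹𝒫f. Then A_Pcℒᵀ + ℒA_Pcᵀ + BBᵀ ⪯ 0 and Eℒᵀ = ℒEᵀ; moreover A_Pcᵀ𝒫c + 𝒫cᵀA_Pc + [−𝒫cᵀB, Cᵀ]·[−𝒫cᵀB, Cᵀ]ᵀ = 0 and Eᵀ𝒫c = 𝒫cᵀE. -/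
open Matrix

noncomputable section

section AuxLemmas
variable {S : Type*} [Ring S]

lemma gare_aux1 (a a' p p' f f' g k r : S)
    (h1 : a' * p + p' * a - p' * g * p + k = 0)
    (h2 : a * f' + f * a' - f * k * f' + g + (r + r) = 0) :
    (1 + f * p') * ((a - g * p) * f') + (f * (a' - p' * g)) * (1 + p * f')
      + (1 + f * p') * g * (1 + p * f') = -(r + r) := by
  have key : (1 + f * p') * ((a - g * p) * f') + (f * (a' - p' * g)) * (1 + p * f')
      + (1 + f * p') * g * (1 + p * f')
      = f * (a' * p + p' * a - p' * g * p + k) * f'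
        + (a * f' + f * a' - f * k * f' + g + (r + r)) - (r + r) := by
    noncomm_ring
  rw [key, h1, h2]
  simp

lemma gare_aux2 (e e' p p' f f' : S)
    (hf : e * f' = f * e') (hc : e' * p = p' * e) :
    (1 + f * p') * (e * f') = (f * e') * (1 + p * f') := by
  have key : (1 + f * p') * (e * f') - (f * e') * (1 + p * f')
      = (e * f' - f * e') + f * (p' * e - e' * p) * f' := by noncomm_ring
  have h0 : (1 + f * p') * (e * f') - (f * e') * (1 + p * f') = 0 := by
    rw [key, hf, hc]; simp
  exact sub_eq_zero.mp h0

lemma gare_aux3 (a a' p p' g k : S)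
    (h1 : a' * p + p' * a - p' * g * p + k = 0) :
    (a' - p' * g) * p + p' * (a - g * p) + (p' * g * p + k) = 0 := by
  have key : (a' - p' * g) * p + p' * (a - g * p) + (p' * g * p + k)
      = a' * p + p' * a - p' * g * p + k := by noncomm_ring
  rw [key, h1]

end AuxLemmas

/-- Theorem `thm:nrcf_lyap`: the matrices `ℒ = (I + 𝒫f𝒫cᵀ)⁻¹𝒫f` and
`𝒫c` satisfy the generalized Lyapunov (in)equalities associated with the normalized right
coprime factorization. -/
theorem coprime_factor_lyapunov_inequalities
    {n m : ℕ} (E J R Q : Matrix (Fin n) (Fin n) ℝ) (B : Matrix (Fin n) (Fin m) ℝ)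
    (A C_ : _) (hA : A = (J - R) * Q) (hC : C_ = Bᵀ * Q)
    (hJ : Jᵀ = -J) (hR : R.PosSemidef) (hEQ : (Eᵀ * Q).PosSemidef)
    (hreg : PencilRegular E A)
    (hstab : StronglyStabilizable E A B)
    (hdet : StronglyDetectable E A C_)
    (Pc Pf : Matrix (Fin n) (Fin n) ℝ)
    (hPc : ControlStabilizing E A B C_ Pc)
    (hPf : FilterStabilizing E A B C_ R Pf)
    (hinv : IsUnit (1 + Pf * Pcᵀ))
    (APc L : Matrix (Fin n) (Fin n) ℝ)
    (hAPc : APc = A - B * Bᵀ * Pc)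
    (hL : L = (1 + Pf * Pcᵀ)⁻¹ * Pf) :
    (-(APc * Lᵀ + L * APcᵀ + B * Bᵀ)).PosSemidef ∧
    E * Lᵀ = L * Eᵀ ∧
    APcᵀ * Pc + Pcᵀ * APc +
        Matrix.fromCols (-(Pcᵀ * B)) C_ᵀ * (Matrix.fromCols (-(Pcᵀ * B)) C_ᵀ)ᵀ = 0 ∧
    Eᵀ * Pc = Pcᵀ * E := by
  
  obtain ⟨⟨hc1, hc2⟩, -⟩ := hPc
  obtain ⟨⟨hf1, hf2⟩, -⟩ := hPf
  set M : Matrix (Fin n) (Fin n) ℝ := 1 + Pf * Pcᵀ with hM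
  have hMd : IsUnit M.det := (Matrix.isUnit_iff_isUnit_det M).mp hinv
  have hMT : Mᵀ = 1 + Pc * Pfᵀ := by
    simp [hM, Matrix.transpose_add, Matrix.transpose_mul]
  have hMTd : IsUnit (Mᵀ).det := by rw [Matrix.det_transpose]; exact hMd
  have hLT : Lᵀ = Pfᵀ * (Mᵀ)⁻¹ := by
    rw [hL, Matrix.transpose_mul, Matrix.transpose_nonsing_inv]
  rw [Matrix.mul_assoc Pcᵀ B Bᵀ] at hc1
  rw [Matrix.mul_assoc Pf C_ᵀ C_, two_smul ℝ R] at hf1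
  have hAPcT : APcᵀ = Aᵀ - Pcᵀ * (B * Bᵀ) := by
    rw [hAPc]
    simp [Matrix.transpose_sub, Matrix.transpose_mul]
  have key := gare_aux1 A Aᵀ Pc Pcᵀ Pf Pfᵀ (B * Bᵀ) (C_ᵀ * C_) R hc1 hf1
  rw [← hAPc, ← hAPcT, ← hM, ← hMT] at key
  have main : APc * Lᵀ + L * APcᵀ + B * Bᵀ = M⁻¹ * (-(R + R)) * (Mᵀ)⁻¹ := by
    rw [← key, hLT, hL]
    simp only [Matrix.mul_add, Matrix.add_mul, Matrix.mul_assoc]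
    simp only [Matrix.mul_nonsing_inv _ hMTd, Matrix.mul_one,
      Matrix.nonsing_inv_mul_cancel_left (h := hMd)]
  refine ⟨?_, ?_, ?_, hc2⟩
  · have hpsd := (hR.add hR).mul_mul_conjTranspose_same M⁻¹
    rw [Matrix.conjTranspose_eq_transpose_of_trivial, Matrix.transpose_nonsing_inv] at hpsd
    have : -(APc * Lᵀ + L * APcᵀ + B * Bᵀ) = M⁻¹ * (R + R) * (Mᵀ)⁻¹ := by
      rw [main, Matrix.mul_neg, Matrix.neg_mul, neg_neg]
    rw [this]; exact hpsd
  · have keyE := gare_aux2 E Eᵀ Pc Pcᵀ Pf Pfᵀ hf2 hc2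
    rw [← hM, ← hMT] at keyE
    have h' : E * Pfᵀ = M⁻¹ * (Pf * Eᵀ * Mᵀ) := by
      rw [← keyE, Matrix.nonsing_inv_mul_cancel_left _ _ hMd]
    calc E * Lᵀ = E * Pfᵀ * (Mᵀ)⁻¹ := by rw [hLT, Matrix.mul_assoc]
      _ = M⁻¹ * (Pf * Eᵀ * Mᵀ) * (Mᵀ)⁻¹ := by rw [h']
      _ = M⁻¹ * (Pf * Eᵀ) := by
          rw [Matrix.mul_assoc M⁻¹ _ (Mᵀ)⁻¹, Matrix.mul_nonsing_inv_cancel_right _ _ hMTd]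
      _ = L * Eᵀ := by rw [hL, Matrix.mul_assoc]
  · have key3 := gare_aux3 A Aᵀ Pc Pcᵀ (B * Bᵀ) (C_ᵀ * C_) hc1
    rw [← hAPc, ← hAPcT] at key3
    have hfc : Matrix.fromCols (-(Pcᵀ * B)) C_ᵀ * (Matrix.fromCols (-(Pcᵀ * B)) C_ᵀ)ᵀ
        = Pcᵀ * (B * Bᵀ) * Pc + C_ᵀ * C_ := by
      rw [Matrix.transpose_fromCols, Matrix.fromCols_mul_fromRows]
      simp [Matrix.transpose_neg, Matrix.transpose_mul, Matrix.mul_assoc]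
    rw [hfc]
    exact key3
end
end

section
/- Consider a port-Hamiltonian descriptor system given by E, J, R, Q ∈ ℝ^{n×n} and B ∈ ℝ^{n×m} with Jᵀ = −J, R = Rᵀ ⪰ 0, EᵀQ = QᵀE ⪰ 0, A := (J−R)Q, C := BᵀQ, such that (E,A) is regular, (E,A,B) is strongly stabilizable, (E,A,C) is strongly detectable, and Q is invertible. Let S, T ∈ GL(n,ℝ) be such that SET⁻¹ = [[I_r, 0],[0, 0]] (r = rank E) and S(A−BC)T⁻¹ = [[A₁₁, 0],[0, I_{n−r}]]; write SB = [B₁; B₂], CT⁻¹ = [C₁, C₂]. Consider the KYP LMI for the original system: EᵀX = XᵀE and [xᵀ uᵀ]·[[−AᵀX − XᵀA, Cᵀ − XᵀB],[C − BᵀX, 0]]·[x; u] ≥ 0 for all (x,u) ∈ ℝ^{n+m} with Ax + Bu ∈ im(E); and the reduced KYP LMI 𝒲(X₁₁) := [[−A₁₁ᵀX₁₁ − X₁₁A₁₁ − 2C₁ᵀC₁, C₁ᵀ − X₁₁B₁ + 2C₁ᵀC₂B₂],[C₁ − B₁ᵀX₁₁ + 2B₂ᵀC₂ᵀC₁, −C₂B₂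 − B₂ᵀC₂ᵀ − 2B₂ᵀC₂ᵀC₂B₂]] ⪰ 0 in symmetric X₁₁ ∈ ℝ^{r×r}. Then: (1) for every solution X ∈ ℝ^{n×n} of the original KYP LMI, the matrix X₁₁ := [I_r 0]·S⁻ᵀXT⁻¹·[I_r; 0] is symmetric and satisfies 𝒲(X₁₁) ⪰ 0; (2) conversely, for every symmetric X₁₁ ∈ ℝ^{r×r} with 𝒲(X₁₁) ⪰ 0 and arbitrary X₂₁ ∈ ℝ^{(n−r)×r}, X₂₂ ∈ ℝ^{(n−r)×(n−r)}, the matrix X := Sᵀ·[[X₁₁, 0],[X₂₁, X₂₂]]·T is a solution of the original KYP LMI. -/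
open Matrix

noncomputable section

/-- The block matrix of the reduced KYP LMI (general-index case, after output feedback). -/
def redKYPgen {r q m : ℕ} (A11 : Matrix (Fin r) (Fin r) ℝ) (B1 : Matrix (Fin r) (Fin m) ℝ)
    (B2 : Matrix (Fin q) (Fin m) ℝ) (C1 : Matrix (Fin m) (Fin r) ℝ)
    (C2 : Matrix (Fin m) (Fin q) ℝ) (X : Matrix (Fin r) (Fin r) ℝ) :
    Matrix (Fin r ⊕ Fin m) (Fin r ⊕ Fin m) ℝ :=
  Matrix.fromBlocks
    (-(A11ᵀ * X) - X * A11 - (2 : ℝ) • (C1ᵀ * C1))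
    (C1ᵀ - X * B1 + (2 : ℝ) • (C1ᵀ * (C2 * B2)))
    (C1 - B1ᵀ * X + (2 : ℝ) • (B2ᵀ * C2ᵀ * C1))
    (-(C2 * B2) - B2ᵀ * C2ᵀ - (2 : ℝ) • (B2ᵀ * C2ᵀ * (C2 * B2)))

/-- `X` is a solution of the KYP LMI restricted to the system space. -/
def KYPSolution {ν μ : Type*} [Fintype ν] [DecidableEq ν] [Fintype μ]
    (E A : Matrix ν ν ℝ) (B : Matrix ν μ ℝ) (C : Matrix μ ν ℝ) (X : Matrix ν ν ℝ) : Prop :=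
  Eᵀ * X = Xᵀ * E ∧
    ∀ (x : ν → ℝ) (u : μ → ℝ),
      A.mulVec x + B.mulVec u ∈ LinearMap.range E.mulVecLin →
      0 ≤ x ⬝ᵥ ((-(Aᵀ * X) - Xᵀ * A).mulVec x) + x ⬝ᵥ ((Cᵀ - Xᵀ * B).mulVec u)
        + u ⬝ᵥ ((C - Bᵀ * X).mulVec x)

lemma dotTrans {k l : Type*} [Fintype k] [Fintype l] (M : Matrix k l ℝ) (x : l → ℝ) (y : k → ℝ) :
    x ⬝ᵥ Mᵀ *ᵥ y = (M *ᵥ x) ⬝ᵥ y := by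
  rw [Matrix.dotProduct_mulVec, Matrix.vecMul_transpose]


lemma F_eq {ν μ : Type*} [Fintype ν] [Fintype μ]
    (A : Matrix ν ν ℝ) (B : Matrix ν μ ℝ) (C : Matrix μ ν ℝ) (X : Matrix ν ν ℝ)
    (x : ν → ℝ) (u : μ → ℝ) :
    x ⬝ᵥ ((-(Aᵀ * X) - Xᵀ * A) *ᵥ x) + x ⬝ᵥ ((Cᵀ - Xᵀ * B) *ᵥ u) + u ⬝ᵥ ((C - Bᵀ * X) *ᵥ x)
      = 2 * (u ⬝ᵥ (C *ᵥ x)) - 2 * ((X *ᵥ x) ⬝ᵥ (A *ᵥ x + B *ᵥ u)) := by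
  simp only [Matrix.sub_mulVec, Matrix.neg_mulVec, ← Matrix.mulVec_mulVec,
    dotProduct_sub, dotProduct_neg, dotProduct_add, dotTrans]
  linear_combination - (dotProduct_comm (A *ᵥ x) (X *ᵥ x))
    + (dotProduct_comm (C *ᵥ x) u) - (dotProduct_comm (B *ᵥ u) (X *ᵥ x))


section Blocks
variable {r q m : ℕ} (A11 : Matrix (Fin r) (Fin r) ℝ) (B1 : Matrix (Fin r) (Fin m) ℝ)
  (B2 : Matrix (Fin q) (Fin m) ℝ) (C1 : Matrix (Fin m) (Fin r) ℝ) (C2 : Matrix (Fin m) (Fin q) ℝ)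

/-- auxiliary: the transformed `E`. -/
def EtBlk (r q : ℕ) : Matrix (Fin r ⊕ Fin q) (Fin r ⊕ Fin q) ℝ :=
  Matrix.fromBlocks 1 0 0 0

/-- auxiliary: the transformed `A`. -/
def AtBlk : Matrix (Fin r ⊕ Fin q) (Fin r ⊕ Fin q) ℝ :=
  Matrix.fromBlocks A11 0 0 1 + Matrix.fromRows B1 B2 * Matrix.fromCols C1 C2

lemma EtBlk_mulVec (w : Fin r ⊕ Fin q → ℝ) :
    EtBlk r q *ᵥ w = Sum.elim (w ∘ Sum.inl) 0 := by
  rw [EtBlk, fromBlocks_mulVec]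
  simp

lemma EtBlk_range (z : Fin r ⊕ Fin q → ℝ) :
    z ∈ LinearMap.range (EtBlk r q).mulVecLin ↔ z ∘ Sum.inr = 0 := by
  constructor
  · rintro ⟨w, rfl⟩
    simp [Matrix.mulVecLin_apply, EtBlk_mulVec]
  · intro h
    refine ⟨z, ?_⟩
    rw [Matrix.mulVecLin_apply, EtBlk_mulVec]
    funext i
    cases i with
    | inl i => rfl
    | inr i => exact (congrFun h i).symm

lemma AtBlk_mulVec (x1 : Fin r → ℝ) (x2 : Fin q → ℝ) (u : Fin m → ℝ) :
    AtBlk A11 B1 B2 C1 C2 *ᵥ Sum.elim x1 x2 + Matrix.fromRows B1 B2 *ᵥ u =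
      Sum.elim (A11 *ᵥ x1 + B1 *ᵥ (C1 *ᵥ x1 + C2 *ᵥ x2 + u))
        (x2 + B2 *ᵥ (C1 *ᵥ x1 + C2 *ᵥ x2 + u)) := by
  rw [AtBlk, Matrix.add_mulVec, fromBlocks_mulVec, ← Matrix.mulVec_mulVec]
  funext i
  cases i with
  | inl i => simp [Matrix.mulVec_add]; ring
  | inr i => simp [Matrix.mulVec_add]; ring

lemma core_form (X11 : Matrix (Fin r) (Fin r) ℝ) (X21 : Matrix (Fin q) (Fin r) ℝ)
    (X22 : Matrix (Fin q) (Fin q) ℝ) (hX11 : X11ᵀ = X11)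
    (x1 : Fin r → ℝ) (v : Fin m → ℝ) :
    2 * ((v - C1 *ᵥ x1 + C2 *ᵥ (B2 *ᵥ v)) ⬝ᵥ
        (Matrix.fromCols C1 C2 *ᵥ Sum.elim x1 (-(B2 *ᵥ v))))
      - 2 * ((Matrix.fromBlocks X11 0 X21 X22 *ᵥ Sum.elim x1 (-(B2 *ᵥ v))) ⬝ᵥ
        (AtBlk A11 B1 B2 C1 C2 *ᵥ Sum.elim x1 (-(B2 *ᵥ v))
          + Matrix.fromRows B1 B2 *ᵥ (v - C1 *ᵥ x1 + C2 *ᵥ (B2 *ᵥ v))))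
      = Sum.elim x1 v ⬝ᵥ (redKYPgen A11 B1 B2 C1 C2 X11 *ᵥ Sum.elim x1 v) := by
  have hswap : ∀ y : Fin r → ℝ, x1 ⬝ᵥ X11 *ᵥ y = (X11 *ᵥ x1) ⬝ᵥ y := by
    intro y
    have h := dotTrans X11 x1 y
    rwa [hX11] at h
  have hveq : C1 *ᵥ x1 + C2 *ᵥ (-(B2 *ᵥ v)) + (v - C1 *ᵥ x1 + C2 *ᵥ (B2 *ᵥ v)) = v := by
    simp [Matrix.mulVec_neg]
    abel
  rw [AtBlk_mulVec, hveq]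
  simp only [neg_add_cancel, redKYPgen, fromBlocks_mulVec, Sum.elim_comp_inl, Sum.elim_comp_inr,
    fromCols_mulVec_sumElim, Matrix.zero_mulVec, add_zero, zero_add,
    Matrix.sub_mulVec, Matrix.add_mulVec, Matrix.neg_mulVec, Matrix.smul_mulVec,
    ← Matrix.mulVec_mulVec, Matrix.mulVec_neg, Matrix.mulVec_add, Matrix.mulVec_sub,
    sumElim_dotProduct_sumElim, dotProduct_add, dotProduct_sub, dotProduct_neg,
    dotProduct_smul, add_dotProduct, sub_dotProduct, neg_dotProduct, dotProduct_zero,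
    smul_eq_mul, dotTrans, hswap, zero_dotProduct, dotProduct_zero]
  linear_combination dotProduct_comm v (C1 *ᵥ x1) - dotProduct_comm v (C2 *ᵥ (B2 *ᵥ v))
    - dotProduct_comm (X11 *ᵥ x1) (A11 *ᵥ x1) - dotProduct_comm (X11 *ᵥ x1) (B1 *ᵥ v)

lemma core_cond1 (P : Matrix (Fin r) (Fin r) ℝ) (Q' : Matrix (Fin r) (Fin q) ℝ)
    (R' : Matrix (Fin q) (Fin r) ℝ) (S' : Matrix (Fin q) (Fin q) ℝ) :
    (EtBlk r q)ᵀ * Matrix.fromBlocks P Q' R' S' = (Matrix.fromBlocks P Q' R' S')ᵀ * EtBlk r q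
      ↔ Pᵀ = P ∧ Q' = 0 := by
  rw [EtBlk, fromBlocks_transpose, fromBlocks_transpose, fromBlocks_multiply,
    fromBlocks_multiply]
  simp only [Matrix.transpose_zero, Matrix.transpose_one, Matrix.one_mul, Matrix.mul_one,
    Matrix.zero_mul, Matrix.mul_zero, add_zero, zero_add]
  rw [fromBlocks_inj]
  constructor
  · rintro ⟨h1, h2, -, -⟩
    exact ⟨h1.symm, h2⟩
  · rintro ⟨h1, h2⟩
    exact ⟨h1.symm, h2, by rw [h2, Matrix.transpose_zero], rfl⟩

lemma redKYPgen_herm (X11 : Matrix (Fin r) (Fin r) ℝ) (hX11 : X11ᵀ = X11) :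
    (redKYPgen A11 B1 B2 C1 C2 X11).IsHermitian := by
  have h : (redKYPgen A11 B1 B2 C1 C2 X11)ᵀ = redKYPgen A11 B1 B2 C1 C2 X11 := by
    rw [redKYPgen, fromBlocks_transpose]
    refine Matrix.fromBlocks_inj.mpr ⟨?_, ?_, ?_, ?_⟩ <;>
    · simp only [Matrix.transpose_sub, Matrix.transpose_add, Matrix.transpose_neg,
        Matrix.transpose_mul, Matrix.transpose_transpose, Matrix.transpose_smul, hX11,
        Matrix.mul_assoc]
      try abel
  rw [Matrix.IsHermitian, Matrix.conjTranspose_eq_transpose_of_trivial, h]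

lemma extract11 (M : Matrix (Fin r ⊕ Fin q) (Fin r ⊕ Fin q) ℝ) :
    Matrix.fromCols (1 : Matrix (Fin r) (Fin r) ℝ) (0 : Matrix (Fin r) (Fin q) ℝ) * M
        * Matrix.fromRows (1 : Matrix (Fin r) (Fin r) ℝ) (0 : Matrix (Fin q) (Fin r) ℝ)
      = M.toBlocks₁₁ := by
  ext i j
  simp [Matrix.mul_apply, Matrix.fromCols, Matrix.fromRows_apply_inl, Matrix.fromRows_apply_inr, Fintype.sum_sum_type,
    Matrix.one_apply, Matrix.toBlocks₁₁, Finset.sum_ite_eq, Finset.sum_ite_eq', Matrix.of_apply, Sum.elim_inl,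
    Sum.elim_inr]

lemma core_forward (Xt : Matrix (Fin r ⊕ Fin q) (Fin r ⊕ Fin q) ℝ)
    (h : KYPSolution (EtBlk r q) (AtBlk A11 B1 B2 C1 C2) (Matrix.fromRows B1 B2)
      (Matrix.fromCols C1 C2) Xt) :
    (Xt.toBlocks₁₁)ᵀ = Xt.toBlocks₁₁ ∧
      (redKYPgen A11 B1 B2 C1 C2 Xt.toBlocks₁₁).PosSemidef := by
  obtain ⟨h1, h2⟩ := h
  rw [show Xt = Matrix.fromBlocks Xt.toBlocks₁₁ Xt.toBlocks₁₂ Xt.toBlocks₂₁ Xt.toBlocks₂₂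
    from (Matrix.fromBlocks_toBlocks Xt).symm, core_cond1] at h1
  obtain ⟨hsym, h12⟩ := h1
  have hXt : Xt = Matrix.fromBlocks Xt.toBlocks₁₁ 0 Xt.toBlocks₂₁ Xt.toBlocks₂₂ := by
    conv_lhs => rw [← Matrix.fromBlocks_toBlocks Xt]
    rw [h12]
  refine ⟨hsym, Matrix.PosSemidef.of_dotProduct_mulVec_nonneg (redKYPgen_herm _ _ _ _ _ _ hsym) ?_⟩
  intro z
  have hveq : C1 *ᵥ (z ∘ Sum.inl) + C2 *ᵥ (-(B2 *ᵥ (z ∘ Sum.inr)))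
      + ((z ∘ Sum.inr) - C1 *ᵥ (z ∘ Sum.inl) + C2 *ᵥ (B2 *ᵥ (z ∘ Sum.inr)))
      = z ∘ Sum.inr := by
    simp [Matrix.mulVec_neg]
    abel
  have hmem : (AtBlk A11 B1 B2 C1 C2).mulVec
        (Sum.elim (z ∘ Sum.inl) (-(B2 *ᵥ (z ∘ Sum.inr))))
      + (Matrix.fromRows B1 B2).mulVec
        ((z ∘ Sum.inr) - C1 *ᵥ (z ∘ Sum.inl) + C2 *ᵥ (B2 *ᵥ (z ∘ Sum.inr)))
      ∈ LinearMap.range (EtBlk r q).mulVecLin := by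
    rw [EtBlk_range]
    show (AtBlk A11 B1 B2 C1 C2 *ᵥ _ + Matrix.fromRows B1 B2 *ᵥ _) ∘ Sum.inr = 0
    rw [AtBlk_mulVec, hveq]
    simp
  have h0 := h2 (Sum.elim (z ∘ Sum.inl) (-(B2 *ᵥ (z ∘ Sum.inr))))
    ((z ∘ Sum.inr) - C1 *ᵥ (z ∘ Sum.inl) + C2 *ᵥ (B2 *ᵥ (z ∘ Sum.inr))) hmem
  rw [F_eq, hXt, core_form A11 B1 B2 C1 C2 _ _ _ hsym] at h0
  have hz : Sum.elim (z ∘ Sum.inl) (z ∘ Sum.inr) = z := Sum.elim_comp_inl_inr z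
  rw [hz] at h0
  simpa using h0

lemma core_backward (X11 : Matrix (Fin r) (Fin r) ℝ) (X21 : Matrix (Fin q) (Fin r) ℝ)
    (X22 : Matrix (Fin q) (Fin q) ℝ) (hX11 : X11ᵀ = X11)
    (hpsd : (redKYPgen A11 B1 B2 C1 C2 X11).PosSemidef) :
    KYPSolution (EtBlk r q) (AtBlk A11 B1 B2 C1 C2) (Matrix.fromRows B1 B2)
      (Matrix.fromCols C1 C2) (Matrix.fromBlocks X11 0 X21 X22) := by
  constructor
  · rw [core_cond1]
    exact ⟨hX11, rfl⟩
  · intro x u hmem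
    set v : Fin m → ℝ := C1 *ᵥ (x ∘ Sum.inl) + C2 *ᵥ (x ∘ Sum.inr) + u with hv
    have hcon : (x ∘ Sum.inr) + B2 *ᵥ v = 0 := by
      rw [EtBlk_range] at hmem
      have hx : x = Sum.elim (x ∘ Sum.inl) (x ∘ Sum.inr) := (Sum.elim_comp_inl_inr x).symm
      rw [show (AtBlk A11 B1 B2 C1 C2).mulVec x = AtBlk A11 B1 B2 C1 C2 *ᵥ
        Sum.elim (x ∘ Sum.inl) (x ∘ Sum.inr) from by rw [← hx]] at hmem
      rw [AtBlk_mulVec] at hmem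
      have := congrFun hmem
      funext i
      simpa [hv] using this i
    have hx2 : x ∘ Sum.inr = -(B2 *ᵥ v) := eq_neg_of_add_eq_zero_left hcon
    have hu : u = v - C1 *ᵥ (x ∘ Sum.inl) + C2 *ᵥ (B2 *ᵥ v) := by
      rw [show C2 *ᵥ (B2 *ᵥ v) = -(C2 *ᵥ (x ∘ Sum.inr)) from by
        rw [hx2]; simp [Matrix.mulVec_neg]]
      rw [hv]
      abel
    have hx : x = Sum.elim (x ∘ Sum.inl) (-(B2 *ᵥ v)) := by
      rw [← hx2]
      exact (Sum.elim_comp_inl_inr x).symm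
    calc (0:ℝ) ≤ Sum.elim (x ∘ Sum.inl) v ⬝ᵥ
          (redKYPgen A11 B1 B2 C1 C2 X11 *ᵥ Sum.elim (x ∘ Sum.inl) v) := by
          simpa using hpsd.dotProduct_mulVec_nonneg (Sum.elim (x ∘ Sum.inl) v)
      _ = _ := by
        rw [← core_form A11 B1 B2 C1 C2 X11 X21 X22 hX11 (x ∘ Sum.inl) v, ← F_eq]
        rw [← hu, ← hx]

end Blocks

lemma KYP_transform {ν μ : Type*} [Fintype ν] [DecidableEq ν] [Fintype μ]
    (E A : Matrix ν ν ℝ) (B : Matrix ν μ ℝ) (C : Matrix μ ν ℝ) (X : Matrix ν ν ℝ)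
    (S T S' T' : Matrix ν ν ℝ)
    (hS1 : S * S' = 1) (hS2 : S' * S = 1) (hT1 : T * T' = 1) (hT2 : T' * T = 1)
    (h : KYPSolution E A B C X) :
    KYPSolution (S * E * T') (S * A * T') (S * B) (C * T') (S'ᵀ * X * T') := by
  have kS : Sᵀ * S'ᵀ = 1 := by rw [← Matrix.transpose_mul, hS2, Matrix.transpose_one]
  constructor
  · have e1 : (S * E * T')ᵀ * (S'ᵀ * X * T') = T'ᵀ * (Eᵀ * X) * T' := by
      simp only [Matrix.transpose_mul, Matrix.mul_assoc]
      rw [show Sᵀ * (S'ᵀ * (X * T')) = X * T' by rw [← Matrix.mul_assoc, kS, Matrix.one_mul]]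
    have e2 : (S'ᵀ * X * T')ᵀ * (S * E * T') = T'ᵀ * (Xᵀ * E) * T' := by
      simp only [Matrix.transpose_mul, Matrix.transpose_transpose, Matrix.mul_assoc]
      rw [show S' * (S * (E * T')) = E * T' by rw [← Matrix.mul_assoc, hS2, Matrix.one_mul]]
    rw [e1, e2, h.1]
  · intro x u hmem
    set y := T' *ᵥ x with hy
    have hmem' : A *ᵥ y + B *ᵥ u ∈ LinearMap.range E.mulVecLin := by
      obtain ⟨w, hw⟩ := hmem
      simp only [Matrix.mulVecLin_apply] at hw
      refine ⟨T' *ᵥ w, ?_⟩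
      have := congrArg (fun z => S' *ᵥ z) hw
      simp only [Matrix.mulVec_add, Matrix.mulVec_mulVec, ← Matrix.mul_assoc] at this ⊢
      rw [Matrix.mulVecLin_apply]
      simp only [Matrix.mulVec_mulVec]
      rw [hS2, Matrix.one_mul, Matrix.one_mul, Matrix.one_mul] at this
      simpa [hy, Matrix.mulVec_mulVec] using this
    have h0 := h.2 y u hmem'
    rw [show (A.mulVec y + B.mulVec u) = A *ᵥ y + B *ᵥ u from rfl] at hmem'
    calc (0:ℝ) ≤ _ := h0
    _ = _ := by
      rw [F_eq, F_eq]
      have e3 : (C * T') *ᵥ x = C *ᵥ y := by rw [hy, Matrix.mulVec_mulVec]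
      have e4 : (S'ᵀ * X * T') *ᵥ x = S'ᵀ *ᵥ (X *ᵥ y) := by
        rw [hy, Matrix.mulVec_mulVec, Matrix.mulVec_mulVec, Matrix.mul_assoc]
      have e5 : (S * A * T') *ᵥ x + (S * B) *ᵥ u = S *ᵥ (A *ᵥ y + B *ᵥ u) := by
        rw [hy, Matrix.mulVec_add, Matrix.mulVec_mulVec, Matrix.mulVec_mulVec,
          Matrix.mulVec_mulVec, Matrix.mul_assoc]
      rw [e3, e4, e5]
      have e6 : (S'ᵀ *ᵥ (X *ᵥ y)) ⬝ᵥ (S *ᵥ (A *ᵥ y + B *ᵥ u))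
          = (X *ᵥ y) ⬝ᵥ (A *ᵥ y + B *ᵥ u) := by
        rw [dotProduct_comm, dotTrans, Matrix.mulVec_mulVec, hS2, Matrix.one_mulVec,
          dotProduct_comm]
      rw [e6]


/-- (correspondence of solutions of the original and the reduced KYP
LMIs; special case of Proposition 3.2.2 b) in Voigt's thesis). -/
theorem KYP_solution_correspondence
    {r q m : ℕ}
    (E J R Q : Matrix (Fin r ⊕ Fin q) (Fin r ⊕ Fin q) ℝ)
    (B : Matrix (Fin r ⊕ Fin q) (Fin m) ℝ)
    (A C_ : _) (hA : A = (J - R) * Q) (hC : C_ = Bᵀ * Q)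
    (hJ : Jᵀ = -J) (hRpsd : R.PosSemidef) (hEQ : (Eᵀ * Q).PosSemidef)
    (hreg : PencilRegular E A)
    (hstab : StronglyStabilizable E A B)
    (hdet : StronglyDetectable E A C_)
    (hQ : IsUnit Q)
    (S T : Matrix (Fin r ⊕ Fin q) (Fin r ⊕ Fin q) ℝ) (hS : IsUnit S) (hT : IsUnit T)
    (hE : S * E * T⁻¹ = Matrix.fromBlocks (1 : Matrix (Fin r) (Fin r) ℝ) 0 0
      (0 : Matrix (Fin q) (Fin q) ℝ))
    (A11 : Matrix (Fin r) (Fin r) ℝ)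
    (hWCF : S * (A - B * C_) * T⁻¹ =
      Matrix.fromBlocks A11 0 0 (1 : Matrix (Fin q) (Fin q) ℝ))
    (B1 : Matrix (Fin r) (Fin m) ℝ) (B2 : Matrix (Fin q) (Fin m) ℝ)
    (hB : S * B = Matrix.fromRows B1 B2)
    (C1 : Matrix (Fin m) (Fin r) ℝ) (C2 : Matrix (Fin m) (Fin q) ℝ)
    (hCt : C_ * T⁻¹ = Matrix.fromCols C1 C2) :
    -- (1): from solutions of the original KYP LMI to the reduced one
    (∀ X : Matrix (Fin r ⊕ Fin q) (Fin r ⊕ Fin q) ℝ, KYPSolution E A B C_ X →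
      (Matrix.fromCols (1 : Matrix (Fin r) (Fin r) ℝ) (0 : Matrix (Fin r) (Fin q) ℝ)
          * ((S⁻¹)ᵀ * X * T⁻¹)
          * Matrix.fromRows (1 : Matrix (Fin r) (Fin r) ℝ) (0 : Matrix (Fin q) (Fin r) ℝ))ᵀ
        = Matrix.fromCols (1 : Matrix (Fin r) (Fin r) ℝ) (0 : Matrix (Fin r) (Fin q) ℝ)
          * ((S⁻¹)ᵀ * X * T⁻¹)
          * Matrix.fromRows (1 : Matrix (Fin r) (Fin r) ℝ) (0 : Matrix (Fin q) (Fin r) ℝ) ∧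
      (redKYPgen A11 B1 B2 C1 C2
        (Matrix.fromCols (1 : Matrix (Fin r) (Fin r) ℝ) (0 : Matrix (Fin r) (Fin q) ℝ)
          * ((S⁻¹)ᵀ * X * T⁻¹)
          * Matrix.fromRows (1 : Matrix (Fin r) (Fin r) ℝ)
            (0 : Matrix (Fin q) (Fin r) ℝ))).PosSemidef) ∧
    -- (2): from symmetric solutions of the reduced KYP LMI to the original one
    (∀ X11 : Matrix (Fin r) (Fin r) ℝ, X11ᵀ = X11 →
      (redKYPgen A11 B1 B2 C1 C2 X11).PosSemidef →
      ∀ (X21 : Matrix (Fin q) (Fin r) ℝ) (X22 : Matrix (Fin q) (Fin q) ℝ),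
        KYPSolution E A B C_ (Sᵀ * Matrix.fromBlocks X11 0 X21 X22 * T)) := by
  have hSd : IsUnit S.det := (Matrix.isUnit_iff_isUnit_det S).mp hS
  have hTd : IsUnit T.det := (Matrix.isUnit_iff_isUnit_det T).mp hT
  have hS1 : S * S⁻¹ = 1 := Matrix.mul_nonsing_inv S hSd
  have hS2 : S⁻¹ * S = 1 := Matrix.nonsing_inv_mul S hSd
  have hT1 : T * T⁻¹ = 1 := Matrix.mul_nonsing_inv T hTd
  have hT2 : T⁻¹ * T = 1 := Matrix.nonsing_inv_mul T hTd
  have hEt : S * E * T⁻¹ = EtBlk r q := by rw [hE]; rfl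
  have hAt : S * A * T⁻¹ = AtBlk A11 B1 B2 C1 C2 := by
    have h1 : S * A * T⁻¹ - S * B * C_ * T⁻¹ = Matrix.fromBlocks A11 0 0 1 := by
      rw [← hWCF, Matrix.mul_sub, Matrix.sub_mul, ← Matrix.mul_assoc]
    unfold AtBlk
    rw [← hB, ← hCt, ← h1, ← Matrix.mul_assoc (S * B) C_ T⁻¹]
    abel
  constructor
  · intro X hX
    have h := KYP_transform E A B C_ X S T S⁻¹ T⁻¹ hS1 hS2 hT1 hT2 hX
    rw [hEt, hAt, hB, hCt] at h
    have h2 := core_forward A11 B1 B2 C1 C2 ((S⁻¹)ᵀ * X * T⁻¹) h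
    rw [extract11]
    exact h2
  · intro X11 hX11 hpsd X21 X22
    have hcore := core_backward A11 B1 B2 C1 C2 X11 X21 X22 hX11 hpsd
    have h := KYP_transform (EtBlk r q) (AtBlk A11 B1 B2 C1 C2) (Matrix.fromRows B1 B2)
      (Matrix.fromCols C1 C2) (Matrix.fromBlocks X11 0 X21 X22)
      S⁻¹ T⁻¹ S T hS2 hS1 hT2 hT1 hcore
    rw [← hEt, ← hAt, ← hB, ← hCt] at h
    have cancel : ∀ M : Matrix (Fin r ⊕ Fin q) (Fin r ⊕ Fin q) ℝ,
        S⁻¹ * (S * M * T⁻¹) * T = M := by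
      intro M
      simp only [Matrix.mul_assoc]
      rw [hT2, Matrix.mul_one, ← Matrix.mul_assoc, hS2, Matrix.one_mul]
    have hB' : S⁻¹ * (S * B) = B := by rw [← Matrix.mul_assoc, hS2, Matrix.one_mul]
    have hC' : C_ * T⁻¹ * T = C_ := by rw [Matrix.mul_assoc, hT2, Matrix.mul_one]
    rw [cancel E, cancel A, hB', hC'] at h
    exact h
end
end

section
/- Let E, J, R, Q ∈ ℝ^{n×n} and B ∈ ℝ^{n×m} define a port-Hamiltonian descriptor system (Jᵀ = −J, R = Rᵀ positive semidefinite, EᵀQ = QᵀE positive semidefinite), with A := (J−R)Q and C := BᵀQ. Suppose 𝒫c ∈ ℝ^{n×n} satisfies the control GARE Aᵀ𝒫c + 𝒫cᵀA − 𝒫cᵀBBᵀ𝒫c + CᵀC = 0 and 𝒫f ∈ ℝ^{n×n} satisfies the modified filter GARE A𝒫fᵀ + 𝒫fAᵀ − 𝒫fCᵀC𝒫fᵀ + BBᵀ + 2R = 0. Then, with A_Pf := A − 𝒫fCᵀC, one has the identity (I_n + 𝒫fᵀ𝒫c)ᵀA_Pfᵀ𝒫c + 𝒫cᵀA_Pf(I_n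 + 𝒫fᵀ𝒫c) = −2𝒫cᵀR𝒫c − (I_n + 𝒫fᵀ𝒫c)ᵀCᵀC(I_n + 𝒫fᵀ𝒫c); in particular, (I_n + 𝒫fᵀ𝒫c)ᵀA_Pfᵀ𝒫c + 𝒫cᵀA_Pf(I_n + 𝒫fᵀ𝒫c) ⪯ −2𝒫cᵀR𝒫c ⪯ 0. -/
open Matrix

noncomputable section

/-- the Lyapunov identity from the proof of Theorem `thm:err_bnd`:
for solutions of the control GARE and the modified filter GARE one has
`(I + 𝒫fᵀ𝒫c)ᵀ A_Pfᵀ 𝒫c + 𝒫cᵀ A_Pf (I + 𝒫fᵀ𝒫c)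
  = −2𝒫cᵀR𝒫c − (I + 𝒫fᵀ𝒫c)ᵀCᵀC(I + 𝒫fᵀ𝒫c) ⪯ −2𝒫cᵀR𝒫c ⪯ 0`. -/
theorem filter_feedback_lyapunov_identity
    {n m : ℕ} (E J R Q : Matrix (Fin n) (Fin n) ℝ) (B : Matrix (Fin n) (Fin m) ℝ)
    (A C_ : _) (hA : A = (J - R) * Q) (hC : C_ = Bᵀ * Q)
    (hJ : Jᵀ = -J) (hR : R.PosSemidef) (hEQ : (Eᵀ * Q).PosSemidef)
    (Pc Pf : Matrix (Fin n) (Fin n) ℝ)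
    (hPc : Aᵀ * Pc + Pcᵀ * A - Pcᵀ * B * Bᵀ * Pc + C_ᵀ * C_ = 0)
    (hPf : A * Pfᵀ + Pf * Aᵀ - Pf * C_ᵀ * C_ * Pfᵀ + B * Bᵀ + (2 : ℝ) • R = 0)
    (APf : Matrix (Fin n) (Fin n) ℝ) (hAPf : APf = A - Pf * C_ᵀ * C_) :
    (1 + Pfᵀ * Pc)ᵀ * APfᵀ * Pc + Pcᵀ * APf * (1 + Pfᵀ * Pc)
        = -((2 : ℝ) • (Pcᵀ * R * Pc))
          - (1 + Pfᵀ * Pc)ᵀ * C_ᵀ * C_ * (1 + Pfᵀ * Pc) ∧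
    (-((2 : ℝ) • (Pcᵀ * R * Pc))
        - ((1 + Pfᵀ * Pc)ᵀ * APfᵀ * Pc + Pcᵀ * APf * (1 + Pfᵀ * Pc))).PosSemidef ∧
    ((2 : ℝ) • (Pcᵀ * R * Pc)).PosSemidef := by
  subst hAPf
  have key : (1 + Pfᵀ * Pc)ᵀ * (A - Pf * C_ᵀ * C_)ᵀ * Pc
        + Pcᵀ * (A - Pf * C_ᵀ * C_) * (1 + Pfᵀ * Pc)
        - (-((2 : ℝ) • (Pcᵀ * R * Pc))
          - (1 + Pfᵀ * Pc)ᵀ * C_ᵀ * C_ * (1 + Pfᵀ * Pc))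
      = (Aᵀ * Pc + Pcᵀ * A - Pcᵀ * B * Bᵀ * Pc + C_ᵀ * C_)
        + Pcᵀ * (A * Pfᵀ + Pf * Aᵀ - Pf * C_ᵀ * C_ * Pfᵀ + B * Bᵀ + (2 : ℝ) • R) * Pc := by
    rw [two_smul, two_smul]
    simp only [Matrix.transpose_add, Matrix.transpose_one, Matrix.transpose_mul,
      Matrix.transpose_sub, Matrix.transpose_transpose, Matrix.add_mul, Matrix.one_mul]
    noncomm_ring
    simp only [Matrix.mul_assoc]
    abel
  rw [hPc, hPf] at key
  simp only [Matrix.mul_zero, Matrix.zero_mul, add_zero] at key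
  have hid : (1 + Pfᵀ * Pc)ᵀ * (A - Pf * C_ᵀ * C_)ᵀ * Pc
        + Pcᵀ * (A - Pf * C_ᵀ * C_) * (1 + Pfᵀ * Pc)
      = -((2 : ℝ) • (Pcᵀ * R * Pc))
          - (1 + Pfᵀ * Pc)ᵀ * C_ᵀ * C_ * (1 + Pfᵀ * Pc) := by
    have := sub_eq_zero.mp key
    exact this
  refine ⟨hid, ?_, ?_⟩
  · rw [hid]
    have : -((2 : ℝ) • (Pcᵀ * R * Pc)) - (-((2 : ℝ) • (Pcᵀ * R * Pc))
          - (1 + Pfᵀ * Pc)ᵀ * C_ᵀ * C_ * (1 + Pfᵀ * Pc))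
        = (1 + Pfᵀ * Pc)ᵀ * C_ᵀ * C_ * (1 + Pfᵀ * Pc) := by abel
    rw [this]
    have h2 : (1 + Pfᵀ * Pc)ᵀ * C_ᵀ * C_ * (1 + Pfᵀ * Pc)
        = (C_ * (1 + Pfᵀ * Pc))ᴴ * (C_ * (1 + Pfᵀ * Pc)) := by
      simp [Matrix.conjTranspose_mul, Matrix.mul_assoc,
        Matrix.conjTranspose_eq_transpose_of_trivial]
    rw [h2]
    exact Matrix.posSemidef_conjTranspose_mul_self _
  · have h3 : Pcᵀ * R * Pc = Pcᵀ * R * (Pcᵀ)ᴴ := by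
      simp [Matrix.conjTranspose_eq_transpose_of_trivial]
    have hp := hR.mul_mul_conjTranspose_same Pcᵀ
    rw [two_smul, h3]
    exact hp.add hp
end
end
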